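/- arXiv:0906.5053 — 3 statements merged into one kernel-verified Lean document; each statement's English description precedes it below -/
import Mathlib

section
/- Let G be a 4-connected finite simple graph with minimum degree δ, let C be a longest cycle in G which is a D₃-cycle, and let x₁x₂ be an edge of G∖C. With R = N_C(x₁) ∪ N_C(x₂), M = N_C(x₁) ∩ N_C(x₂), and Y = R ∪ R⁺ ∪ M⁺², one has |Y| ≥ 2·d(x₁) + 2·d(x₂) − |M| − 4 ≥ 4δ − |M| − 4. -/
namespace SimpleGraph

variable {V : Type*}

/-- `S` is a cut-set of `G`: deleting `S` disconnects the graph. -/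
def IsCutSet [Fintype V] (G : SimpleGraph V) (S : Finset V) : Prop :=
  ¬ (G.induce ((↑S : Set V)ᶜ)).Connected

/-- The vertex connectivity of `G`: the largest `k` such that `G` is `k`-connected,
i.e. `G` has more than `k` vertices and removing fewer than `k` vertices
always leaves a connected graph. -/
noncomputable def vertexConnectivity [Fintype V] (G : SimpleGraph V) : ℕ :=
  sSup {k | k < Fintype.card V ∧
    ∀ S : Finset V, S.card < k → (G.induce ((↑S : Set V)ᶜ)).Connected}

/-- `S` is a minimum cut-set of `G`: a cut-set whose cardinality equals
the connectivity of `G`. -/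
def IsMinCutSet [Fintype V] (G : SimpleGraph V) (S : Finset V) : Prop :=
  G.IsCutSet S ∧ S.card = G.vertexConnectivity

/-- The circumference of `G`: the length of a longest cycle (`0` if there is none). -/
noncomputable def circumference (G : SimpleGraph V) : ℕ :=
  sSup {n | ∃ (v : V) (C : G.Walk v v), C.IsCycle ∧ C.length = n}

/-- `C` is a longest cycle in `G`. -/
def IsLongestCycle {G : SimpleGraph V} {v : V} (C : G.Walk v v) : Prop :=
  C.IsCycle ∧ ∀ (w : V) (D : G.Walk w w), D.IsCycle → D.length ≤ C.length

/-- `C` is a dominating cycle: every edge of `G` has an endpoint on `C`. -/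
def IsDominatingCycle {G : SimpleGraph V} {v : V} (C : G.Walk v v) : Prop :=
  C.IsCycle ∧ ∀ a b : V, G.Adj a b → a ∈ C.support ∨ b ∈ C.support

/-- `C` is a `D₃`-cycle: every path of length at least 2 in `G` has a vertex
in common with `C`. -/
def IsD3Cycle {G : SimpleGraph V} {v : V} (C : G.Walk v v) : Prop :=
  C.IsCycle ∧ ∀ (a b : V) (P : G.Walk a b), P.IsPath → 2 ≤ P.length →
    ∃ z, z ∈ P.support ∧ z ∈ C.support

/-- The successor of a vertex `x` on the (oriented) cycle `C`
(and `x` itself if `x` does not lie on `C`). -/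
noncomputable def cycleSucc [DecidableEq V] {G : SimpleGraph V} {v : V}
    (C : G.Walk v v) (x : V) : V :=
  if h : x ∈ C.support.tail then C.support.tail.next x h else x

/-- The neighborhood of `x` on the cycle `C`, as a finset: `N(x) ∩ V(C)`. -/
def cycleNbhd [Fintype V] [DecidableEq V] {G : SimpleGraph V} [DecidableRel G.Adj]
    {v : V} (C : G.Walk v v) (x : V) : Finset V :=
  G.neighborFinset x ∩ C.support.toFinset

end SimpleGraph

open SimpleGraph

set_option linter.unusedSectionVars false

namespace CycleAux

variable {V : Type*} [DecidableEq V] {G : SimpleGraph V} {v : V}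

lemma mem_tail_of_mem_support {C : G.Walk v v} (hnil : ¬ C.Nil) {x : V}
    (hx : x ∈ C.support) : x ∈ C.support.tail := by
  rw [C.support_eq_cons] at hx
  rcases List.mem_cons.mp hx with rfl | h
  · have hv := C.tail.end_mem_support
    rwa [Walk.support_tail_of_not_nil C hnil] at hv
  · exact h

lemma length_rotate {C : G.Walk v v} {x : V} (hx : x ∈ C.support) :
    (C.rotate x hx).length = C.length := by
  have h := congrArg Walk.length (C.take_spec hx)
  rw [Walk.length_append] at h
  rw [Walk.rotate, Walk.length_append]
  omega

lemma mem_support_iff_mem_tail {C : G.Walk v v} (hnil : ¬ C.Nil) {a : V} :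
    a ∈ C.support ↔ a ∈ C.support.tail :=
  ⟨mem_tail_of_mem_support hnil, List.mem_of_mem_tail⟩

lemma not_nil_rotate {C : G.Walk v v} (hnil : ¬ C.Nil) {x : V} (hx : x ∈ C.support) :
    ¬ (C.rotate x hx).Nil := by
  rw [Walk.not_nil_iff_lt_length] at hnil ⊢
  rwa [length_rotate]

lemma mem_support_rotate_iff {C : G.Walk v v} (hnil : ¬ C.Nil) {x a : V} (hx : x ∈ C.support) :
    a ∈ (C.rotate x hx).support ↔ a ∈ C.support := by
  rw [mem_support_iff_mem_tail (not_nil_rotate hnil hx), mem_support_iff_mem_tail hnil]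
  exact (Walk.support_rotate C x hx).mem_iff

lemma cycleSucc_eq_next {C : G.Walk v v} (hnil : ¬ C.Nil) {x : V} (hx : x ∈ C.support) :
    cycleSucc C x = C.support.tail.next x (mem_tail_of_mem_support hnil hx) := by
  rw [cycleSucc, dif_pos (mem_tail_of_mem_support hnil hx)]

lemma cycleSucc_spec {C : G.Walk v v} (hC : C.IsCycle) {x : V} (hx : x ∈ C.support) :
    cycleSucc C x = (C.rotate x hx).getVert 1 := by
  have h3 : 3 ≤ C.length := hC.three_le_length
  have hnil : ¬ C.Nil := by rw [Walk.not_nil_iff_lt_length]; omega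
  set C' := C.rotate x hx with hC'def
  have hC' : C'.IsCycle := hC.rotate hx
  have hnil' : ¬ C'.Nil := not_nil_rotate hnil hx
  have hsupC' : C'.support.tail = C'.tail.support := (Walk.support_tail_of_not_nil C' hnil').symm
  set y := C'.getVert 1 with hy
  have htail : C'.tail.support = y :: C'.tail.support.tail := C'.tail.support_eq_cons
  set rest := C'.tail.support.tail with hrest
  have hlist : C'.support.tail = y :: rest := by rw [hsupC', htail]
  have hnodup : (y :: rest).Nodup := hlist ▸ hC'.support_nodup
  have hlen : (y :: rest).length = C.length := by
    rw [← hlist, List.length_tail, Walk.length_support, length_rotate]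
    omega
  have hrest_ne : rest ≠ [] := by
    intro h
    rw [h] at hlen
    simp at hlen
    omega
  -- x is the last element of C'.support.tail
  have hxlast : x = (y :: rest).getLast (List.cons_ne_nil _ _) := by
    have h1 : C'.support.getLast? = some x := by
      rw [List.getLast?_eq_getLast_of_ne_nil (by simp), C'.getLast_support]
    rw [C'.support_eq_cons, hlist, List.getLast?_cons_cons,
      List.getLast?_eq_getLast_of_ne_nil (List.cons_ne_nil _ _)] at h1
    exact (Option.some_inj.mp h1).symm
  have hxrest : x ∈ rest := by
    rw [hxlast, List.getLast_cons hrest_ne]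
    exact List.getLast_mem hrest_ne
  have hxyne : x ≠ y := by
    intro h
    rw [List.nodup_cons] at hnodup
    exact hnodup.1 (h ▸ hxrest)
  have hnext : (y :: rest).next x (by simp [hxrest]) = y :=
    List.next_getLast_cons (l := rest) (x := x) hxrest y (by simp [hxrest]) hxyne hxlast
      (List.nodup_cons.mp hnodup).2
  rw [cycleSucc_eq_next hnil hx]
  rw [List.isRotated_next_eq (Walk.support_rotate C x hx).symm hC.support_nodup
    (mem_tail_of_mem_support hnil hx)]
  generalize_proofs hp
  revert hp
  rw [hlist]
  intro hp
  exact hnext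

end CycleAux

namespace CycleAux

variable {V : Type*} [DecidableEq V] {G : SimpleGraph V} {v : V}

lemma adj_cycleSucc {C : G.Walk v v} (hC : C.IsCycle) {x : V} (hx : x ∈ C.support) :
    G.Adj x (cycleSucc C x) := by
  have hnil : ¬ C.Nil := by
    rw [Walk.not_nil_iff_lt_length]; have := hC.three_le_length; omega
  rw [cycleSucc_spec hC hx]
  exact Walk.adj_snd (not_nil_rotate hnil hx)

lemma cycleSucc_mem_support {C : G.Walk v v} (hC : C.IsCycle) {x : V} (hx : x ∈ C.support) :
    cycleSucc C x ∈ C.support := by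
  have hnil : ¬ C.Nil := by
    rw [Walk.not_nil_iff_lt_length]; have := hC.three_le_length; omega
  rw [cycleSucc_spec hC hx]
  have h := (C.rotate x hx).tail.start_mem_support
  rw [Walk.support_tail_of_not_nil _ (not_nil_rotate hnil hx)] at h
  have h2 := List.mem_of_mem_tail h
  rwa [mem_support_rotate_iff hnil hx] at h2

lemma cycleSucc_cycleSucc_spec {C : G.Walk v v} (hC : C.IsCycle) {x : V} (hx : x ∈ C.support) :
    cycleSucc C (cycleSucc C x) = (C.rotate x hx).getVert 2 := by
  have h3 : 3 ≤ C.length := hC.three_le_length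
  have hnil : ¬ C.Nil := by rw [Walk.not_nil_iff_lt_length]; omega
  set C' := C.rotate x hx with hC'def
  have hnil' : ¬ C'.Nil := not_nil_rotate hnil hx
  set y := C'.getVert 1 with hy
  have hys : cycleSucc C x = y := cycleSucc_spec hC hx
  have hyC : y ∈ C.support := hys ▸ cycleSucc_mem_support hC hx
  have hnilt : ¬ C'.tail.Nil := by
    rw [Walk.not_nil_iff_lt_length]
    have h1 := Walk.length_tail_add_one hnil'
    have h2 : C'.length = C.length := length_rotate hx
    omega
  have hz2 : C'.tail.getVert 1 = C'.getVert 2 := Walk.getVert_tail C'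
  have hts : C'.tail.tail.support = C'.tail.getVert 1 :: C'.tail.tail.support.tail :=
    C'.tail.tail.support_eq_cons
  have hlist : C'.support.tail = y :: C'.getVert 2 :: C'.tail.tail.support.tail := by
    rw [← Walk.support_tail_of_not_nil C' hnil', ← Walk.cons_support_tail (p := C'.tail) hnilt, ← hz2, ← hts]
  rw [hys, cycleSucc_eq_next hnil hyC]
  rw [List.isRotated_next_eq (Walk.support_rotate C x hx).symm hC.support_nodup
    (mem_tail_of_mem_support hnil hyC)]
  generalize_proofs hp
  revert hp
  rw [hlist]
  intro hp
  exact List.next_cons_cons_eq' _ _ _ _ _ rfl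

lemma isPath_tail_of_isPath {a b : V} {P : G.Walk a b} (hP : P.IsPath) (hnil : ¬ P.Nil) :
    P.tail.IsPath := by
  constructor
  · constructor
    have h := hP.isTrail.edges_nodup
    have he : P.edges = s(a, P.getVert 1) :: P.tail.edges := by
      conv_lhs => rw [← Walk.cons_tail_eq P hnil, Walk.edges_cons]
    rw [he] at h
    exact h.of_cons
  · have h := hP.support_nodup
    rw [← Walk.cons_support_tail (p := P) hnil, List.nodup_cons] at h
    exact h.2

lemma isPath_tail_of_isCycle {x : V} {W : G.Walk x x} (hW : W.IsCycle) (hnil : ¬ W.Nil) :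
    W.tail.IsPath := by
  constructor
  · constructor
    have h := hW.isCircuit.isTrail.edges_nodup
    have he : W.edges = s(x, W.getVert 1) :: W.tail.edges := by
      conv_lhs => rw [← Walk.cons_tail_eq W hnil, Walk.edges_cons]
    rw [he] at h
    exact h.of_cons
  · rw [Walk.support_tail_of_not_nil W hnil]
    exact hW.support_nodup

end CycleAux

namespace CycleAux

variable {V : Type*} [DecidableEq V] {G : SimpleGraph V} {v : V}

lemma newcycle2 {u z a : V} (Q : G.Walk z u) (hQ : Q.IsPath) (hzu : z ≠ u)
    (ha : a ∉ Q.support) (h1 : G.Adj u a) (h2 : G.Adj a z) :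
    (Walk.cons h1 (Walk.cons h2 Q)).IsCycle := by
  have hu : u ∈ Q.support := Q.end_mem_support
  have hz : z ∈ Q.support := Q.start_mem_support
  have hau : a ≠ u := fun h => ha (h ▸ hu)
  have haz : a ≠ z := fun h => ha (h ▸ hz)
  refine ⟨⟨⟨?_⟩, by simp⟩, ?_⟩
  · rw [Walk.edges_cons, Walk.edges_cons, List.nodup_cons, List.nodup_cons]
    refine ⟨?_, ?_, hQ.isTrail.edges_nodup⟩
    · rw [List.mem_cons]
      rintro (h | h)
      · rw [Sym2.eq_iff] at h
        rcases h with ⟨-, h⟩ | ⟨h, -⟩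
        · exact haz h
        · exact hzu h.symm
      · exact ha (Q.snd_mem_support_of_mem_edges h)
    · intro h
      exact ha (Q.fst_mem_support_of_mem_edges h)
  · rw [Walk.support_cons, List.tail_cons, Walk.support_cons, List.nodup_cons]
    exact ⟨ha, hQ.support_nodup⟩

lemma newcycle3 {u z a b : V} (Q : G.Walk z u) (hQ : Q.IsPath) (hab : a ≠ b)
    (ha : a ∉ Q.support) (hb : b ∉ Q.support)
    (h1 : G.Adj u a) (h2 : G.Adj a b) (h3 : G.Adj b z) :
    (Walk.cons h1 (Walk.cons h2 (Walk.cons h3 Q))).IsCycle := by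
  have hu : u ∈ Q.support := Q.end_mem_support
  have hz : z ∈ Q.support := Q.start_mem_support
  have hau : a ≠ u := fun h => ha (h ▸ hu)
  have haz : a ≠ z := fun h => ha (h ▸ hz)
  have hbu : b ≠ u := fun h => hb (h ▸ hu)
  have hbz : b ≠ z := fun h => hb (h ▸ hz)
  refine ⟨⟨⟨?_⟩, by simp⟩, ?_⟩
  · rw [Walk.edges_cons, Walk.edges_cons, Walk.edges_cons,
      List.nodup_cons, List.nodup_cons, List.nodup_cons]
    refine ⟨?_, ?_, ?_, hQ.isTrail.edges_nodup⟩
    · rw [List.mem_cons, List.mem_cons]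
      rintro (h | h | h)
      · rw [Sym2.eq_iff] at h
        rcases h with ⟨h, -⟩ | ⟨h, -⟩
        · exact hau h.symm
        · exact hbu h.symm
      · rw [Sym2.eq_iff] at h
        rcases h with ⟨h, -⟩ | ⟨-, h⟩
        · exact hbu h.symm
        · exact hab h
      · exact ha (Q.snd_mem_support_of_mem_edges h)
    · rw [List.mem_cons]
      rintro (h | h)
      · rw [Sym2.eq_iff] at h
        rcases h with ⟨h, -⟩ | ⟨h, -⟩
        · exact hab h
        · exact haz h
      · exact ha (Q.fst_mem_support_of_mem_edges h)
    · intro h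
      exact hb (Q.fst_mem_support_of_mem_edges h)
  · rw [Walk.support_cons, List.tail_cons, Walk.support_cons, Walk.support_cons,
      List.nodup_cons, List.nodup_cons]
    exact ⟨by simp [hab, ha], hb, hQ.support_nodup⟩

end CycleAux

namespace CycleAux

variable {V : Type*} [DecidableEq V] {G : SimpleGraph V} {v : V}

lemma surgA {C : G.Walk v v} (hLC : C.IsCycle)
    (hmax : ∀ (w : V) (D : G.Walk w w), D.IsCycle → D.length ≤ C.length)
    {u a : V} (hu : u ∈ C.support) (haC : a ∉ C.support)
    (h1 : G.Adj u a) (h2 : G.Adj a (cycleSucc C u)) : False := by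
  have h3 : 3 ≤ C.length := hLC.three_le_length
  have hnil : ¬ C.Nil := by rw [Walk.not_nil_iff_lt_length]; omega
  set C' := C.rotate u hu with hC'def
  have hC' : C'.IsCycle := hLC.rotate hu
  have hnil' : ¬ C'.Nil := not_nil_rotate hnil hu
  have hlen' : C'.length = C.length := length_rotate hu
  have hy : cycleSucc C u = C'.getVert 1 := cycleSucc_spec hLC hu
  have hQ : C'.tail.IsPath := isPath_tail_of_isCycle hC' hnil'
  have hzu : C'.getVert 1 ≠ u := hy ▸ (adj_cycleSucc hLC hu).ne'
  have haQ : a ∉ C'.tail.support := by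
    rw [Walk.support_tail_of_not_nil C' hnil']
    intro h
    exact haC ((mem_support_rotate_iff hnil hu).mp (List.mem_of_mem_tail h))
  have h2' : G.Adj a (C'.getVert 1) := hy ▸ h2
  have hW : (Walk.cons h1 (Walk.cons h2' C'.tail)).IsCycle :=
    newcycle2 C'.tail hQ hzu haQ h1 h2'
  have hle := hmax u _ hW
  have hlt := Walk.length_tail_add_one hnil'
  rw [Walk.length_cons, Walk.length_cons] at hle
  omega

lemma surgB {C : G.Walk v v} (hLC : C.IsCycle)
    (hmax : ∀ (w : V) (D : G.Walk w w), D.IsCycle → D.length ≤ C.length)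
    {u a b : V} (hu : u ∈ C.support) (haC : a ∉ C.support) (hbC : b ∉ C.support)
    (hab : a ≠ b)
    (h1 : G.Adj u a) (h2 : G.Adj a b) (h3 : G.Adj b (cycleSucc C u)) : False := by
  have h3' : 3 ≤ C.length := hLC.three_le_length
  have hnil : ¬ C.Nil := by rw [Walk.not_nil_iff_lt_length]; omega
  set C' := C.rotate u hu with hC'def
  have hC' : C'.IsCycle := hLC.rotate hu
  have hnil' : ¬ C'.Nil := not_nil_rotate hnil hu
  have hlen' : C'.length = C.length := length_rotate hu
  have hy : cycleSucc C u = C'.getVert 1 := cycleSucc_spec hLC hu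
  have hQ : C'.tail.IsPath := isPath_tail_of_isCycle hC' hnil'
  have haQ : a ∉ C'.tail.support := by
    rw [Walk.support_tail_of_not_nil C' hnil']
    intro h
    exact haC ((mem_support_rotate_iff hnil hu).mp (List.mem_of_mem_tail h))
  have hbQ : b ∉ C'.tail.support := by
    rw [Walk.support_tail_of_not_nil C' hnil']
    intro h
    exact hbC ((mem_support_rotate_iff hnil hu).mp (List.mem_of_mem_tail h))
  have h3'' : G.Adj b (C'.getVert 1) := hy ▸ h3
  have hW : (Walk.cons h1 (Walk.cons h2 (Walk.cons h3'' C'.tail))).IsCycle :=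
    newcycle3 C'.tail hQ hab haQ hbQ h1 h2 h3''
  have hle := hmax u _ hW
  have hlt := Walk.length_tail_add_one hnil'
  rw [Walk.length_cons, Walk.length_cons, Walk.length_cons] at hle
  omega

lemma surgC {C : G.Walk v v} (hLC : C.IsCycle)
    (hmax : ∀ (w : V) (D : G.Walk w w), D.IsCycle → D.length ≤ C.length)
    {u a b : V} (hu : u ∈ C.support) (haC : a ∉ C.support) (hbC : b ∉ C.support)
    (hab : a ≠ b)
    (h1 : G.Adj u a) (h2 : G.Adj a b)
    (h3 : G.Adj b (cycleSucc C (cycleSucc C u))) : False := by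
  have h3' : 3 ≤ C.length := hLC.three_le_length
  have hnil : ¬ C.Nil := by rw [Walk.not_nil_iff_lt_length]; omega
  set C' := C.rotate u hu with hC'def
  have hC' : C'.IsCycle := hLC.rotate hu
  have hnil' : ¬ C'.Nil := not_nil_rotate hnil hu
  have hlen' : C'.length = C.length := length_rotate hu
  have hlt1 : C'.tail.length + 1 = C'.length := Walk.length_tail_add_one hnil'
  have hnilt : ¬ C'.tail.Nil := by rw [Walk.not_nil_iff_lt_length]; omega
  have hlt2 : C'.tail.tail.length + 1 = C'.tail.length := Walk.length_tail_add_one hnilt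
  have hz : cycleSucc C (cycleSucc C u) = C'.getVert 2 :=
    cycleSucc_cycleSucc_spec hLC hu
  have hQty : C'.tail.getVert 1 = C'.getVert 2 := Walk.getVert_tail C'
  have hQ : C'.tail.tail.IsPath :=
    isPath_tail_of_isPath (isPath_tail_of_isCycle hC' hnil') hnilt
  have hsub : ∀ w, w ∈ C'.tail.tail.support → w ∈ C.support := by
    intro w hw
    rw [Walk.support_tail_of_not_nil C'.tail hnilt] at hw
    have hw2 := List.mem_of_mem_tail hw
    rw [Walk.support_tail_of_not_nil C' hnil'] at hw2
    exact (mem_support_rotate_iff hnil hu).mp (List.mem_of_mem_tail hw2)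
  have haQ : a ∉ C'.tail.tail.support := fun h => haC (hsub a h)
  have hbQ : b ∉ C'.tail.tail.support := fun h => hbC (hsub b h)
  have h3'' : G.Adj b (C'.tail.getVert 1) := by rw [hQty, ← hz]; exact h3
  have hW : (Walk.cons h1 (Walk.cons h2 (Walk.cons h3'' C'.tail.tail))).IsCycle :=
    newcycle3 C'.tail.tail hQ hab haQ hbQ h1 h2 h3''
  have hle := hmax u _ hW
  rw [Walk.length_cons, Walk.length_cons, Walk.length_cons] at hle
  omega

end CycleAux

open SimpleGraph CycleAux in
/-- **Lemma 1.** `|Y| ≥ 2d(x₁) + 2d(x₂) - |M| - 4 ≥ 4δ - |M| - 4`. -/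
theorem statement_3 {V : Type*} [Fintype V] [DecidableEq V]
    (G : SimpleGraph V) [DecidableRel G.Adj]
    (h4 : 4 ≤ G.vertexConnectivity)
    {v : V} (C : G.Walk v v) (hC : IsLongestCycle C) (hD3 : IsD3Cycle C)
    (x₁ x₂ : V) (hadj : G.Adj x₁ x₂) (hx₁ : x₁ ∉ C.support) (hx₂ : x₂ ∉ C.support)
    (R M Y : Finset V)
    (hR : R = cycleNbhd C x₁ ∪ cycleNbhd C x₂)
    (hM : M = cycleNbhd C x₁ ∩ cycleNbhd C x₂)
    (hY : Y = R ∪ R.image (cycleSucc C) ∪ M.image (cycleSucc C ∘ cycleSucc C)) :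
    2 * G.degree x₁ + 2 * G.degree x₂ ≤ Y.card + M.card + 4 ∧
      4 * G.minDegree ≤ 2 * G.degree x₁ + 2 * G.degree x₂ := by
  obtain ⟨hCc, hmax⟩ := hC
  have h3 : 3 ≤ C.length := hCc.three_le_length
  have hnil : ¬ C.Nil := by rw [Walk.not_nil_iff_lt_length]; omega
  have hne : x₁ ≠ x₂ := hadj.ne
  have hmemN : ∀ (y w : V), w ∈ cycleNbhd C y ↔ G.Adj y w ∧ w ∈ C.support := by
    intro y w
    simp [cycleNbhd, List.mem_toFinset]
  -- degree bounds via the D₃ property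
  have hdeg : ∀ (y z : V), G.Adj y z → y ∉ C.support → z ∉ C.support →
      G.degree y ≤ (cycleNbhd C y).card + 1 := by
    intro y z hyz hy hz
    have hsub : G.neighborFinset y ⊆ cycleNbhd C y ∪ {z} := by
      intro w hw
      rw [mem_neighborFinset] at hw
      by_cases hwC : w ∈ C.support
      · exact Finset.mem_union_left _ ((hmemN y w).mpr ⟨hw, hwC⟩)
      by_cases hwz : w = z
      · exact Finset.mem_union_right _ (by simp [hwz])
      exfalso
      have hP : (Walk.cons hw.symm (Walk.cons hyz Walk.nil) : G.Walk w z).IsPath := by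
        rw [Walk.cons_isPath_iff, Walk.cons_isPath_iff]
        refine ⟨⟨Walk.IsPath.nil, by simp [hyz.ne]⟩, ?_⟩
        simp only [Walk.support_cons, Walk.support_nil, List.mem_cons, List.mem_singleton]
        push_neg
        exact ⟨hw.ne', hwz, by simp⟩
      obtain ⟨t, ht, htC⟩ := hD3.2 _ _ _ hP (by simp)
      simp only [Walk.support_cons, Walk.support_nil, List.mem_cons, List.mem_singleton] at ht
      rcases ht with rfl | rfl | ht2
      · exact hwC htC
      · exact hy htC
      · rcases ht2 with rfl | h
        · exact hz htC
        · simp at h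
    calc G.degree y = (G.neighborFinset y).card := rfl
      _ ≤ (cycleNbhd C y ∪ {z}).card := Finset.card_le_card hsub
      _ ≤ (cycleNbhd C y).card + 1 := by
          refine le_trans (Finset.card_union_le _ _) ?_
          simp
  have hd1 : G.degree x₁ ≤ (cycleNbhd C x₁).card + 1 := hdeg x₁ x₂ hadj hx₁ hx₂
  have hd2 : G.degree x₂ ≤ (cycleNbhd C x₂).card + 1 := hdeg x₂ x₁ hadj.symm hx₂ hx₁
  set f := cycleSucc C with hf
  have hRsub : ∀ w ∈ R, w ∈ C.support := by
    intro w hw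
    rw [hR, Finset.mem_union] at hw
    rcases hw with hw | hw
    · exact ((hmemN x₁ w).mp hw).2
    · exact ((hmemN x₂ w).mp hw).2
  have hMsub : M ⊆ R := by
    rw [hR, hM]; exact Finset.inter_subset_union
  -- injectivity of the successor map on the cycle
  have hinj : ∀ x ∈ C.support, ∀ y ∈ C.support, f x = f y → x = y := by
    intro x hx y hy h
    rw [hf, cycleSucc_eq_next hnil hx, cycleSucc_eq_next hnil hy] at h
    have e1 := List.prev_next C.support.tail hCc.support_nodup x
      (mem_tail_of_mem_support hnil hx)
    have e2 := List.prev_next C.support.tail hCc.support_nodup y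
      (mem_tail_of_mem_support hnil hy)
    rw [← e1, ← e2]
    congr 1
  -- the three disjointness facts
  have hD1 : ∀ u ∈ R, ∀ w ∈ R, w = f u → False := by
    intro u hu w hw hwf
    have huC : u ∈ C.support := hRsub u hu
    rw [hR, Finset.mem_union] at hu hw
    subst hwf
    rcases hu with hu | hu <;> rcases hw with hw | hw
    · exact surgA hCc hmax huC hx₁ ((hmemN x₁ u).mp hu).1.symm ((hmemN x₁ _).mp hw).1
    · exact surgB hCc hmax huC hx₁ hx₂ hne ((hmemN x₁ u).mp hu).1.symm hadj
        ((hmemN x₂ _).mp hw).1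
    · exact surgB hCc hmax huC hx₂ hx₁ hne.symm ((hmemN x₂ u).mp hu).1.symm hadj.symm
        ((hmemN x₁ _).mp hw).1
    · exact surgA hCc hmax huC hx₂ ((hmemN x₂ u).mp hu).1.symm ((hmemN x₂ _).mp hw).1
  have hD2 : ∀ u ∈ M, ∀ w ∈ R, w = f (f u) → False := by
    intro u hu w hw hwf
    have huC : u ∈ C.support := hRsub u (hMsub hu)
    rw [hM, Finset.mem_inter] at hu
    rw [hR, Finset.mem_union] at hw
    subst hwf
    rcases hw with hw | hw
    · exact surgC hCc hmax huC hx₂ hx₁ hne.symm ((hmemN x₂ u).mp hu.2).1.symm hadj.symm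
        ((hmemN x₁ _).mp hw).1
    · exact surgC hCc hmax huC hx₁ hx₂ hne ((hmemN x₁ u).mp hu.1).1.symm hadj
        ((hmemN x₂ _).mp hw).1
  -- disjointness of the three pieces of Y
  have hdisj1 : Disjoint R (R.image f) := by
    rw [Finset.disjoint_left]
    intro w hw hw'
    obtain ⟨u, hu, hwf⟩ := Finset.mem_image.mp hw'
    exact hD1 u hu w hw hwf.symm
  have hdisj2 : Disjoint (R ∪ R.image f) (M.image (f ∘ f)) := by
    rw [Finset.disjoint_left]
    intro w hw hw'
    obtain ⟨u₂, hu₂, hwf₂⟩ := Finset.mem_image.mp hw'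
    rcases Finset.mem_union.mp hw with hw | hw
    · exact hD2 u₂ hu₂ w hw hwf₂.symm
    · obtain ⟨u₁, hu₁, hwf₁⟩ := Finset.mem_image.mp hw
      have hfu₂C : f u₂ ∈ C.support := cycleSucc_mem_support hCc (hRsub u₂ (hMsub hu₂))
      have : u₁ = f u₂ := by
        apply hinj u₁ (hRsub u₁ hu₁) (f u₂) hfu₂C
        rw [hwf₁, ← hwf₂]
        rfl
      exact hD1 u₂ (hMsub hu₂) u₁ hu₁ this
  -- cardinalities
  have himg1 : (R.image f).card = R.card := by
    apply Finset.card_image_of_injOn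
    intro x hx y hy h
    exact hinj x (hRsub x (Finset.mem_coe.mp hx)) y (hRsub y (Finset.mem_coe.mp hy)) h
  have himg2 : (M.image (f ∘ f)).card = M.card := by
    apply Finset.card_image_of_injOn
    intro x hx y hy h
    have hxC : x ∈ C.support := hRsub x (hMsub (Finset.mem_coe.mp hx))
    have hyC : y ∈ C.support := hRsub y (hMsub (Finset.mem_coe.mp hy))
    have h' : f x = f y :=
      hinj (f x) (cycleSucc_mem_support hCc hxC) (f y) (cycleSucc_mem_support hCc hyC) h
    exact hinj x hxC y hyC h'
  have hYcard : Y.card = R.card + R.card + M.card := by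
    rw [hY, Finset.card_union_of_disjoint hdisj2, Finset.card_union_of_disjoint hdisj1,
      himg1, himg2]
  have hcards : R.card + M.card = (cycleNbhd C x₁).card + (cycleNbhd C x₂).card := by
    rw [hR, hM]
    exact Finset.card_union_add_card_inter _ _
  constructor
  · omega
  · have hm1 := G.minDegree_le_degree x₁
    have hm2 := G.minDegree_le_degree x₂
    omega
end

section
/- Let G be a 4-connected finite simple graph with minimum degree δ, connectivity κ, and circumference c, in which every longest cycle is a D₃-cycle, and let S be a minimum cut-set of G. Then either c ≥ 4δ − κ − 3, or there exists a longest cycle C in G such that for every edge x₁x₂ of G∖C one has {x₁, x₂} ∩ S = ∅. -/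
section Helpers

open SimpleGraph Walk List

variable {V : Type*} [DecidableEq V] {G : SimpleGraph V} {v : V}

lemma end_mem_tail {C : G.Walk v v} (hC : C.IsCycle) : v ∈ C.support.tail := by
  obtain ⟨u, h, q, rfl⟩ := Walk.not_nil_iff.1 hC.isCircuit.not_nil
  simp

lemma mem_tail_of_mem_support {C : G.Walk v v} (hC : C.IsCycle) {x : V}
    (hx : x ∈ C.support) : x ∈ C.support.tail := by
  rw [C.support_eq_cons] at hx
  rcases List.mem_cons.1 hx with rfl | h
  · exact end_mem_tail hC
  · exact h

lemma expose {C : G.Walk v v} (hC : C.IsCycle) {x : V} (hx : x ∈ C.support.tail) :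
    ∃ (y₁ y₂ y₃ : V) (Q : G.Walk y₃ x),
      y₁ = cycleSucc C x ∧ y₂ = cycleSucc C y₁ ∧ y₃ = cycleSucc C y₂ ∧
      G.Adj x y₁ ∧ G.Adj y₁ y₂ ∧ G.Adj y₂ y₃ ∧ Q.IsPath ∧
      Q.length + 3 = C.length ∧
      (y₁ :: y₂ :: Q.support).Nodup ∧
      (y₁ :: y₂ :: Q.support).toFinset = C.support.tail.toFinset := by
  classical
  have hLnd : C.support.tail.Nodup := hC.support_nodup
  have hx' : x ∈ C.support := List.mem_of_mem_tail hx
  set Cx := C.rotate x hx' with hCxdef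
  have hCx : Cx.IsCycle := hC.rotate hx'
  have hlen : Cx.length = C.length := by
    have h1 := (C.rotate_darts x hx').perm.length_eq
    rw [Cx.length_darts, C.length_darts] at h1
    exact h1
  have hrot : Cx.support.tail ~r C.support.tail := C.support_rotate x hx'
  have h3 : 3 ≤ Cx.length := hCx.three_le_length
  obtain ⟨y₁, h₁, p₁, hp₁⟩ := Walk.not_nil_iff.1
    (show ¬ Cx.Nil by rw [Walk.not_nil_iff_lt_length]; omega)
  have hp₁len : p₁.length + 1 = Cx.length := by rw [hp₁]; simp
  obtain ⟨y₂, h₂, p₂, hp₂⟩ := Walk.not_nil_iff.1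
    (show ¬ p₁.Nil by rw [Walk.not_nil_iff_lt_length]; omega)
  have hp₂len : p₂.length + 2 = Cx.length := by
    rw [hp₂] at hp₁len; simp only [Walk.length_cons] at hp₁len; omega
  obtain ⟨y₃, h₃, Q, hQ⟩ := Walk.not_nil_iff.1
    (show ¬ p₂.Nil by rw [Walk.not_nil_iff_lt_length]; omega)
  have hQlen : Q.length + 3 = C.length := by
    rw [hQ] at hp₂len; simp only [Walk.length_cons] at hp₂len; omega
  have hM : Cx.support.tail = y₁ :: y₂ :: Q.support := by
    rw [hp₁, hp₂, hQ]; simp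
  have hMnd : (y₁ :: y₂ :: Q.support).Nodup := hM ▸ hCx.support_nodup
  have hnd2 : (y₂ :: Q.support).Nodup := (List.nodup_cons.1 hMnd).2
  have hndQ : Q.support.Nodup := (List.nodup_cons.1 hnd2).2
  have hLM : C.support.tail ~r (y₁ :: y₂ :: Q.support) := hM ▸ hrot.symm
  have hMfin : (y₁ :: y₂ :: Q.support).toFinset = C.support.tail.toFinset :=
    (List.toFinset_eq_of_perm _ _ hLM.perm).symm
  have hQpath : Q.IsPath := by
    have hcy := (Walk.cons_isCycle_iff p₁ h₁).1 (hp₁ ▸ hCx)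
    have hp₁path : p₁.IsPath := hcy.1
    rw [hp₂, Walk.cons_isPath_iff] at hp₁path
    have hp₂path := hp₁path.1
    rw [hQ, Walk.cons_isPath_iff] at hp₂path
    exact hp₂path.1
  have hxQ : x ∈ Q.support := Q.end_mem_support
  have hy₁notQ : y₁ ∉ y₂ :: Q.support := (List.nodup_cons.1 hMnd).1
  have hy₂notQ : y₂ ∉ Q.support := (List.nodup_cons.1 hnd2).1
  have hxy₁ : x ≠ y₁ := fun h => hy₁notQ (h ▸ (List.mem_cons_of_mem _ hxQ))
  have hxy₂ : x ≠ y₂ := fun h => hy₂notQ (h ▸ hxQ)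
  have hxlast : x = (y₁ :: y₂ :: Q.support).getLast (by simp) := by
    rw [List.getLast_cons (by simp), List.getLast_cons (Q.support_ne_nil)]
    exact Q.getLast_support.symm
  have hnext : ∀ (z : V) (hz : z ∈ C.support.tail),
      C.support.tail.next z hz = (y₁ :: y₂ :: Q.support).next z (hLM.mem_iff.1 hz) :=
    fun z hz => List.isRotated_next_eq hLM hLnd hz
  -- σ x = y₁
  have hsx : cycleSucc C x = y₁ := by
    rw [cycleSucc, dif_pos hx, hnext x hx]
    exact List.next_getLast_cons (l := y₂ :: Q.support) (x := x)
      (List.mem_cons_of_mem _ hxQ) y₁ (hLM.mem_iff.1 hx) hxy₁ hxlast hnd2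
  -- σ y₁ = y₂
  have hy₁L : y₁ ∈ C.support.tail := hLM.mem_iff.2 (by simp)
  have hsy₁ : cycleSucc C y₁ = y₂ := by
    rw [cycleSucc, dif_pos hy₁L, hnext y₁ hy₁L]
    exact List.next_cons_cons_eq _ _ _ _
  -- σ y₂ = y₃
  have hy₂L : y₂ ∈ C.support.tail := hLM.mem_iff.2 (by simp)
  have hsy₂ : cycleSucc C y₂ = y₃ := by
    rw [cycleSucc, dif_pos hy₂L, hnext y₂ hy₂L]
    have step1 : (y₁ :: y₂ :: Q.support).next y₂ (hLM.mem_iff.1 hy₂L) =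
        (y₂ :: Q.support).next y₂ (by simp) :=
      by
        have hne : y₂ ≠ y₁ := fun h => hy₁notQ (h ▸ (List.mem_cons_self))
        obtain ⟨t, ht⟩ : ∃ t, Q.support = y₃ :: t := ⟨_, Q.support_eq_cons⟩
        simp only [List.next]
        rw [List.nextOr_cons_of_ne _ _ _ _ hne]
        simp only [ht, List.nextOr_self_cons_cons]
    rw [step1]
    obtain ⟨t, ht⟩ : ∃ t, Q.support = y₃ :: t := ⟨_, Q.support_eq_cons⟩
    simp only [ht]
    exact List.next_cons_cons_eq _ _ _ _
  exact ⟨y₁, y₂, y₃, Q, hsx.symm, hsy₁.symm, hsy₂.symm, h₁, h₂, h₃, hQpath, hQlen,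
    hMnd, hMfin⟩


lemma surgery_alpha {C : G.Walk v v} {x₁ a : V} (hC : C.IsCycle)
    (hlong : ∀ (w : V) (D : G.Walk w w), D.IsCycle → D.length ≤ C.length)
    (hx₁ : x₁ ∉ C.support) (ha : a ∈ C.support.tail)
    (h1 : G.Adj x₁ a) (h2 : G.Adj x₁ (cycleSucc C a)) : False := by
  classical
  obtain ⟨y₁, y₂, y₃, Q, hy1, hy2, hy3, hA1, hA2, hA3, hQpath, hQlen, hMnd, hMfin⟩ :=
    expose hC ha
  have hmemM : ∀ z, z ∈ (y₁ :: y₂ :: Q.support) ↔ z ∈ C.support.tail := fun z => by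
    rw [← List.mem_toFinset, hMfin, List.mem_toFinset]
  have hx₁M : x₁ ∉ (y₁ :: y₂ :: Q.support) := fun h =>
    hx₁ (List.mem_of_mem_tail ((hmemM _).1 h))
  have h2' : G.Adj x₁ y₁ := hy1 ▸ h2
  set R₁ : G.Walk y₁ a := Walk.cons hA2 (Walk.cons hA3 Q) with hR₁
  have hR₁supp : R₁.support = y₁ :: y₂ :: Q.support := by rw [hR₁]; simp
  have hR₁path : R₁.IsPath := Walk.IsPath.mk' (hR₁supp ▸ hMnd)
  have haQ : a ∈ Q.support := Q.end_mem_support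
  have hay₁ : a ≠ y₁ := by
    intro h
    have := (List.nodup_cons.1 hMnd).1
    exact this (h ▸ (List.mem_cons_of_mem _ haQ))
  set W : G.Walk a a := Walk.cons h1.symm (Walk.cons h2' R₁) with hW
  have hWcyc : W.IsCycle := by
    rw [hW, Walk.cons_isCycle_iff]
    constructor
    · rw [Walk.cons_isPath_iff]
      exact ⟨hR₁path, hR₁supp ▸ hx₁M⟩
    · intro hmem
      rw [Walk.edges_cons, List.mem_cons] at hmem
      rcases hmem with h | h
      · rw [Sym2.eq_iff] at h
        rcases h with ⟨h', _⟩ | ⟨h', _⟩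
        · exact h1.ne' h'
        · exact hay₁ h'
      · exact hx₁M (hR₁supp ▸ R₁.snd_mem_support_of_mem_edges h)
  have hWlen : W.length = C.length + 1 := by
    rw [hW]; simp [hR₁]; omega
  have := hlong a W hWcyc
  omega

lemma card_cons_inter (S : Finset V) {a : V} {l : List V} (h : a ∉ l) :
    ((a :: l).toFinset ∩ S).card = (l.toFinset ∩ S).card + (if a ∈ S then 1 else 0) := by
  rw [List.toFinset_cons]
  by_cases haS : a ∈ S
  · rw [Finset.insert_inter_of_mem haS, Finset.card_insert_of_notMem (by
      simp only [Finset.mem_inter, List.mem_toFinset]; tauto), if_pos haS]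
  · rw [Finset.insert_inter_of_notMem haS, if_neg haS, Nat.add_zero]

lemma surgery_beta {C : G.Walk v v} {x₁ x₂ a : V} (hC : C.IsCycle)
    (hlong : ∀ (w : V) (D : G.Walk w w), D.IsCycle → D.length ≤ C.length)
    (hx₁ : x₁ ∉ C.support) (hx₂ : x₂ ∉ C.support) (hx12 : G.Adj x₁ x₂)
    (ha : a ∈ C.support.tail)
    (h1 : G.Adj x₁ a) (h2 : G.Adj x₂ (cycleSucc C a)) : False := by
  classical
  obtain ⟨y₁, y₂, y₃, Q, hy1, hy2, hy3, hA1, hA2, hA3, hQpath, hQlen, hMnd, hMfin⟩ :=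
    expose hC ha
  have hmemM : ∀ z, z ∈ (y₁ :: y₂ :: Q.support) ↔ z ∈ C.support.tail := fun z => by
    rw [← List.mem_toFinset, hMfin, List.mem_toFinset]
  have hx₁M : x₁ ∉ (y₁ :: y₂ :: Q.support) := fun h =>
    hx₁ (List.mem_of_mem_tail ((hmemM _).1 h))
  have hx₂M : x₂ ∉ (y₁ :: y₂ :: Q.support) := fun h =>
    hx₂ (List.mem_of_mem_tail ((hmemM _).1 h))
  have haC : a ∈ C.support := List.mem_of_mem_tail ha
  have h2' : G.Adj x₂ y₁ := hy1 ▸ h2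
  set R₁ : G.Walk y₁ a := Walk.cons hA2 (Walk.cons hA3 Q) with hR₁
  have hR₁supp : R₁.support = y₁ :: y₂ :: Q.support := by rw [hR₁]; simp
  have hR₁path : R₁.IsPath := Walk.IsPath.mk' (hR₁supp ▸ hMnd)
  have haQ : a ∈ Q.support := Q.end_mem_support
  have hay₁ : a ≠ y₁ := by
    intro h
    exact (List.nodup_cons.1 hMnd).1 (h ▸ (List.mem_cons_of_mem _ haQ))
  set W : G.Walk a a := Walk.cons h1.symm (Walk.cons hx12 (Walk.cons h2' R₁)) with hW
  have hWcyc : W.IsCycle := by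
    rw [hW, Walk.cons_isCycle_iff]
    constructor
    · rw [Walk.cons_isPath_iff, Walk.cons_isPath_iff]
      refine ⟨⟨hR₁path, hR₁supp ▸ hx₂M⟩, ?_⟩
      rw [Walk.support_cons, hR₁supp]
      intro hmem
      rcases List.mem_cons.1 hmem with h | h
      · exact hx12.ne h
      · exact hx₁M h
    · intro hmem
      rw [Walk.edges_cons, Walk.edges_cons, List.mem_cons, List.mem_cons] at hmem
      rcases hmem with h | h | h
      · rw [Sym2.eq_iff] at h
        rcases h with ⟨h', _⟩ | ⟨h', _⟩
        · exact h1.ne' h'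
        · exact hx₂ (h' ▸ haC)
      · rw [Sym2.eq_iff] at h
        rcases h with ⟨h', _⟩ | ⟨h', h''⟩
        · exact hx₂ (h' ▸ haC)
        · exact hx12.ne h''
      · exact hx₁M (hR₁supp ▸ R₁.snd_mem_support_of_mem_edges h)
  have hWlen : W.length = C.length + 2 := by
    rw [hW]; simp [hR₁]; omega
  have := hlong a W hWcyc
  omega

lemma surgery_gamma {C : G.Walk v v} {x₁ x₂ a : V} (hC : C.IsCycle)
    (hlong : ∀ (w : V) (D : G.Walk w w), D.IsCycle → D.length ≤ C.length)
    (hx₁ : x₁ ∉ C.support) (hx₂ : x₂ ∉ C.support) (hx12 : G.Adj x₁ x₂)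
    (ha : a ∈ C.support.tail)
    (h1 : G.Adj x₁ a) (h2 : G.Adj x₂ (cycleSucc C (cycleSucc C a))) : False := by
  classical
  obtain ⟨y₁, y₂, y₃, Q, hy1, hy2, hy3, hA1, hA2, hA3, hQpath, hQlen, hMnd, hMfin⟩ :=
    expose hC ha
  have hmemM : ∀ z, z ∈ (y₁ :: y₂ :: Q.support) ↔ z ∈ C.support.tail := fun z => by
    rw [← List.mem_toFinset, hMfin, List.mem_toFinset]
  have hx₁M : x₁ ∉ (y₁ :: y₂ :: Q.support) := fun h =>
    hx₁ (List.mem_of_mem_tail ((hmemM _).1 h))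
  have hx₂M : x₂ ∉ (y₁ :: y₂ :: Q.support) := fun h =>
    hx₂ (List.mem_of_mem_tail ((hmemM _).1 h))
  have haC : a ∈ C.support := List.mem_of_mem_tail ha
  have h2' : G.Adj x₂ y₂ := by rw [hy2, hy1]; exact h2
  set R₂ : G.Walk y₂ a := Walk.cons hA3 Q with hR₂
  have hR₂supp : R₂.support = y₂ :: Q.support := by rw [hR₂]; simp
  have hR₂path : R₂.IsPath := Walk.IsPath.mk' (hR₂supp ▸ (List.nodup_cons.1 hMnd).2)
  have haQ : a ∈ Q.support := Q.end_mem_support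
  have hay₂ : a ≠ y₂ := by
    intro h
    exact (List.nodup_cons.1 (List.nodup_cons.1 hMnd).2).1 (h ▸ haQ)
  have hx₁R₂ : x₁ ∉ R₂.support := fun h =>
    hx₁M (hR₂supp ▸ h |> List.mem_cons_of_mem y₁)
  have hx₂R₂ : x₂ ∉ R₂.support := fun h =>
    hx₂M (hR₂supp ▸ h |> List.mem_cons_of_mem y₁)
  set W : G.Walk a a := Walk.cons h1.symm (Walk.cons hx12 (Walk.cons h2' R₂)) with hW
  have hWcyc : W.IsCycle := by
    rw [hW, Walk.cons_isCycle_iff]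
    constructor
    · rw [Walk.cons_isPath_iff, Walk.cons_isPath_iff]
      refine ⟨⟨hR₂path, hx₂R₂⟩, ?_⟩
      rw [Walk.support_cons]
      intro hmem
      rcases List.mem_cons.1 hmem with h | h
      · exact hx12.ne h
      · exact hx₁R₂ h
    · intro hmem
      rw [Walk.edges_cons, Walk.edges_cons, List.mem_cons, List.mem_cons] at hmem
      rcases hmem with h | h | h
      · rw [Sym2.eq_iff] at h
        rcases h with ⟨h', _⟩ | ⟨h', _⟩
        · exact h1.ne' h'
        · exact hx₂ (h' ▸ haC)
      · rw [Sym2.eq_iff] at h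
        rcases h with ⟨h', _⟩ | ⟨h', h''⟩
        · exact hx₂ (h' ▸ haC)
        · exact hx12.ne h''
      · exact hx₁R₂ (R₂.snd_mem_support_of_mem_edges h)
  have hWlen : W.length = C.length + 1 := by
    rw [hW]; simp [hR₂]; omega
  have := hlong a W hWcyc
  omega

lemma surgery_delta {C : G.Walk v v} {x₁ a : V} {S : Finset V} (hC : C.IsCycle)
    (hmaxS : ∀ (w : V) (D : G.Walk w w), D.IsCycle → D.length = C.length →
      (D.support.tail.toFinset ∩ S).card ≤ (C.support.tail.toFinset ∩ S).card)
    (hx₁ : x₁ ∉ C.support) (hx₁S : x₁ ∈ S) (ha : a ∈ C.support.tail)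
    (h1 : G.Adj x₁ a) (h2 : G.Adj x₁ (cycleSucc C (cycleSucc C a))) :
    cycleSucc C a ∈ S := by
  classical
  obtain ⟨y₁, y₂, y₃, Q, hy1, hy2, hy3, hA1, hA2, hA3, hQpath, hQlen, hMnd, hMfin⟩ :=
    expose hC ha
  have hmemM : ∀ z, z ∈ (y₁ :: y₂ :: Q.support) ↔ z ∈ C.support.tail := fun z => by
    rw [← List.mem_toFinset, hMfin, List.mem_toFinset]
  have hx₁M : x₁ ∉ (y₁ :: y₂ :: Q.support) := fun h =>
    hx₁ (List.mem_of_mem_tail ((hmemM _).1 h))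
  have haC : a ∈ C.support := List.mem_of_mem_tail ha
  have h2' : G.Adj x₁ y₂ := by rw [hy2, hy1]; exact h2
  set R₂ : G.Walk y₂ a := Walk.cons hA3 Q with hR₂
  have hR₂supp : R₂.support = y₂ :: Q.support := by rw [hR₂]; simp
  have hnd2 : (y₂ :: Q.support).Nodup := (List.nodup_cons.1 hMnd).2
  have hR₂path : R₂.IsPath := Walk.IsPath.mk' (hR₂supp ▸ hnd2)
  have haQ : a ∈ Q.support := Q.end_mem_support
  have hay₂ : a ≠ y₂ := by
    intro h
    exact (List.nodup_cons.1 hnd2).1 (h ▸ haQ)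
  have hx₁R₂ : x₁ ∉ R₂.support := fun h =>
    hx₁M (hR₂supp ▸ h |> List.mem_cons_of_mem y₁)
  set W : G.Walk a a := Walk.cons h1.symm (Walk.cons h2' R₂) with hW
  have hWcyc : W.IsCycle := by
    rw [hW, Walk.cons_isCycle_iff]
    constructor
    · rw [Walk.cons_isPath_iff]
      exact ⟨hR₂path, hx₁R₂⟩
    · intro hmem
      rw [Walk.edges_cons, List.mem_cons] at hmem
      rcases hmem with h | h
      · rw [Sym2.eq_iff] at h
        rcases h with ⟨h', _⟩ | ⟨h', _⟩
        · exact h1.ne' h'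
        · exact hay₂ h'
      · exact hx₁R₂ (R₂.snd_mem_support_of_mem_edges h)
  have hWlen : W.length = C.length := by
    rw [hW]; simp [hR₂]; omega
  have hcount := hmaxS a W hWcyc hWlen
  have hWtail : W.support.tail = x₁ :: y₂ :: Q.support := by
    rw [hW]; simp [hR₂]
  have hy₂Q : y₂ ∉ Q.support := (List.nodup_cons.1 hnd2).1
  have hx₁Q : x₁ ∉ y₂ :: Q.support := fun h => hx₁M (List.mem_cons_of_mem _ h)
  have hy₁M : y₁ ∉ y₂ :: Q.support := (List.nodup_cons.1 hMnd).1
  rw [hWtail, card_cons_inter S hx₁Q, card_cons_inter S hy₂Q] at hcount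
  have hCc : (C.support.tail.toFinset ∩ S).card =
      (Q.support.toFinset ∩ S).card + (if y₂ ∈ S then 1 else 0)
        + (if y₁ ∈ S then 1 else 0) := by
    rw [← hMfin, card_cons_inter S hy₁M, card_cons_inter S hy₂Q]
  rw [hCc, if_pos hx₁S] at hcount
  by_contra hy₁S
  have e0 : (if y₁ ∈ S then 1 else 0) = 0 := if_neg (by rw [hy1]; exact hy₁S)
  rw [e0] at hcount
  omega

lemma surgery_epsilon {C : G.Walk v v} {x₁ x₂ a : V} {S : Finset V} (hC : C.IsCycle)
    (hmaxS : ∀ (w : V) (D : G.Walk w w), D.IsCycle → D.length = C.length →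
      (D.support.tail.toFinset ∩ S).card ≤ (C.support.tail.toFinset ∩ S).card)
    (hx₁ : x₁ ∉ C.support) (hx₂ : x₂ ∉ C.support) (hx12 : G.Adj x₁ x₂)
    (hx₁S : x₁ ∈ S) (ha : a ∈ C.support.tail)
    (h1 : G.Adj x₁ a) (h2 : G.Adj x₂ (cycleSucc C (cycleSucc C (cycleSucc C a))))
    (hns : cycleSucc C a ∉ S) :
    cycleSucc C (cycleSucc C a) ∈ S := by
  classical
  obtain ⟨y₁, y₂, y₃, Q, hy1, hy2, hy3, hA1, hA2, hA3, hQpath, hQlen, hMnd, hMfin⟩ :=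
    expose hC ha
  have hmemM : ∀ z, z ∈ (y₁ :: y₂ :: Q.support) ↔ z ∈ C.support.tail := fun z => by
    rw [← List.mem_toFinset, hMfin, List.mem_toFinset]
  have hx₁M : x₁ ∉ (y₁ :: y₂ :: Q.support) := fun h =>
    hx₁ (List.mem_of_mem_tail ((hmemM _).1 h))
  have hx₂M : x₂ ∉ (y₁ :: y₂ :: Q.support) := fun h =>
    hx₂ (List.mem_of_mem_tail ((hmemM _).1 h))
  have haC : a ∈ C.support := List.mem_of_mem_tail ha
  have h2' : G.Adj x₂ y₃ := by rw [hy3, hy2, hy1]; exact h2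
  have haQ : a ∈ Q.support := Q.end_mem_support
  have hx₁Q : x₁ ∉ Q.support := fun h =>
    hx₁M (List.mem_cons_of_mem _ (List.mem_cons_of_mem _ h))
  have hx₂Q : x₂ ∉ Q.support := fun h =>
    hx₂M (List.mem_cons_of_mem _ (List.mem_cons_of_mem _ h))
  set W : G.Walk a a := Walk.cons h1.symm (Walk.cons hx12 (Walk.cons h2' Q)) with hW
  have hWcyc : W.IsCycle := by
    rw [hW, Walk.cons_isCycle_iff]
    constructor
    · rw [Walk.cons_isPath_iff, Walk.cons_isPath_iff]
      refine ⟨⟨hQpath, hx₂Q⟩, ?_⟩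
      rw [Walk.support_cons]
      intro hmem
      rcases List.mem_cons.1 hmem with h | h
      · exact hx12.ne h
      · exact hx₁Q h
    · intro hmem
      rw [Walk.edges_cons, Walk.edges_cons, List.mem_cons, List.mem_cons] at hmem
      rcases hmem with h | h | h
      · rw [Sym2.eq_iff] at h
        rcases h with ⟨h', _⟩ | ⟨h', _⟩
        · exact h1.ne' h'
        · exact hx₂ (h' ▸ haC)
      · rw [Sym2.eq_iff] at h
        rcases h with ⟨h', _⟩ | ⟨h', h''⟩
        · exact hx₂ (h' ▸ haC)
        · exact hx12.ne h''
      · exact hx₁Q (Q.snd_mem_support_of_mem_edges h)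
  have hWlen : W.length = C.length := by
    rw [hW]; simp; omega
  have hcount := hmaxS a W hWcyc hWlen
  have hWtail : W.support.tail = x₁ :: x₂ :: Q.support := by
    rw [hW]; simp
  have hy₂Q : y₂ ∉ Q.support := (List.nodup_cons.1 (List.nodup_cons.1 hMnd).2).1
  have hy₁M : y₁ ∉ y₂ :: Q.support := (List.nodup_cons.1 hMnd).1
  have hx₂Q' : x₂ ∉ Q.support := hx₂Q
  have hx₁Q' : x₁ ∉ x₂ :: Q.support := by
    intro h
    rcases List.mem_cons.1 h with h' | h'
    · exact hx12.ne h'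
    · exact hx₁Q h'
  rw [hWtail, card_cons_inter S hx₁Q', card_cons_inter S hx₂Q'] at hcount
  have hCc : (C.support.tail.toFinset ∩ S).card =
      (Q.support.toFinset ∩ S).card + (if y₂ ∈ S then 1 else 0)
        + (if y₁ ∈ S then 1 else 0) := by
    rw [← hMfin, card_cons_inter S hy₁M, card_cons_inter S hy₂Q]
  have e1 : (if y₁ ∈ S then 1 else 0) = 0 := if_neg (by rw [hy1]; exact hns)
  rw [hCc, if_pos hx₁S, e1] at hcount
  by_contra hy₂S
  have e0 : (if y₂ ∈ S then 1 else 0) = 0 := if_neg (by rw [hy2, hy1]; exact hy₂S)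
  rw [e0] at hcount
  omega

lemma cycleSucc_mem {C : G.Walk v v} (hC : C.IsCycle) {a : V} (ha : a ∈ C.support.tail) :
    cycleSucc C a ∈ C.support.tail := by
  obtain ⟨y₁, y₂, y₃, Q, hy1, hy2, hy3, hA1, _, _, _, _, _, hMfin⟩ := expose hC ha
  rw [← hy1, ← List.mem_toFinset, ← hMfin]
  simp

lemma cycleSucc_adj {C : G.Walk v v} (hC : C.IsCycle) {a : V} (ha : a ∈ C.support.tail) :
    G.Adj a (cycleSucc C a) := by
  obtain ⟨y₁, y₂, y₃, Q, hy1, hy2, hy3, hA1, _, _, _, _, _, _⟩ := expose hC ha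
  rw [← hy1]; exact hA1

lemma cycleSucc_injOn {C : G.Walk v v} (hC : C.IsCycle) {a b : V}
    (ha : a ∈ C.support.tail) (hb : b ∈ C.support.tail)
    (h : cycleSucc C a = cycleSucc C b) : a = b := by
  rw [cycleSucc, dif_pos ha, cycleSucc, dif_pos hb] at h
  have key : ∀ (x y : V) (hx : x ∈ C.support.tail) (hy : y ∈ C.support.tail), x = y →
      C.support.tail.prev x hx = C.support.tail.prev y hy := by
    rintro x y hx hy rfl; rfl
  have h1 := List.prev_next _ hC.support_nodup a ha
  have h2 := List.prev_next _ hC.support_nodup b hb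
  rw [← h1, ← h2]
  exact key _ _ _ _ h

lemma nbr_on_cycle {C : G.Walk v v} {x₁ x₂ z : V} (hC : C.IsCycle)
    (hdom : ∀ (a b : V) (P : G.Walk a b), P.IsPath → 2 ≤ P.length →
      ∃ w, w ∈ P.support ∧ w ∈ C.support)
    (hx₁ : x₁ ∉ C.support) (hx₂ : x₂ ∉ C.support) (hx12 : G.Adj x₁ x₂)
    (hz : G.Adj x₁ z) (hne : z ≠ x₂) : z ∈ C.support.tail := by
  classical
  set P : G.Walk z x₂ := Walk.cons hz.symm (Walk.cons hx12 Walk.nil) with hP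
  have hPpath : P.IsPath := by
    rw [hP, Walk.cons_isPath_iff, Walk.cons_isPath_iff]
    refine ⟨⟨Walk.IsPath.nil, by simp; exact hx12.ne⟩, ?_⟩
    simp only [Walk.support_cons, Walk.support_nil, List.mem_cons, List.mem_singleton,
      List.not_mem_nil, or_false]
    push_neg
    exact ⟨hz.ne', hne⟩
  obtain ⟨w, hwP, hwC⟩ := hdom z x₂ P hPpath (by rw [hP]; simp)
  rw [hP] at hwP
  simp only [Walk.support_cons, Walk.support_nil, List.mem_cons, List.mem_singleton,
    List.not_mem_nil, or_false] at hwP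
  rcases hwP with rfl | rfl | rfl
  · exact mem_tail_of_mem_support hC hwC
  · exact absurd hwC hx₁
  · exact absurd hwC hx₂

lemma master [Fintype V] {C : G.Walk v v} {x₁ x₂ : V} {S : Finset V}
    [DecidableRel G.Adj] (hC : C.IsCycle)
    (hlong : ∀ (w : V) (D : G.Walk w w), D.IsCycle → D.length ≤ C.length)
    (hmaxS : ∀ (w : V) (D : G.Walk w w), D.IsCycle → D.length = C.length →
      (D.support.tail.toFinset ∩ S).card ≤ (C.support.tail.toFinset ∩ S).card)
    (hdom : ∀ (a b : V) (P : G.Walk a b), P.IsPath → 2 ≤ P.length →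
      ∃ w, w ∈ P.support ∧ w ∈ C.support)
    (hx₁ : x₁ ∉ C.support) (hx₂ : x₂ ∉ C.support) (hx12 : G.Adj x₁ x₂)
    (hx₁S : x₁ ∈ S) :
    4 * G.minDegree ≤ C.length + S.card + 3 := by
  classical
  set σ : V → V := cycleSucc C with hσ
  set LF : Finset V := C.support.tail.toFinset with hLF
  have hmemLF : ∀ z, z ∈ LF ↔ z ∈ C.support.tail := fun z => List.mem_toFinset
  have hx₁LF : x₁ ∉ LF := fun h => hx₁ (List.mem_of_mem_tail ((hmemLF _).1 h))
  have hx₂LF : x₂ ∉ LF := fun h => hx₂ (List.mem_of_mem_tail ((hmemLF _).1 h))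
  have hσmem : ∀ z ∈ LF, σ z ∈ LF := fun z hz =>
    (hmemLF _).2 (cycleSucc_mem hC ((hmemLF _).1 hz))
  have hσinj : Set.InjOn σ LF := fun a ha b hb h =>
    cycleSucc_injOn hC ((hmemLF _).1 ha) ((hmemLF _).1 hb) h
  set A : Finset V := LF.filter (fun z => G.Adj x₁ z) with hA
  set B : Finset V := LF.filter (fun z => G.Adj x₂ z) with hB
  have hAsub : A ⊆ LF := Finset.filter_subset _ _
  have hBsub : B ⊆ LF := Finset.filter_subset _ _
  have hAmem : ∀ z, z ∈ A ↔ z ∈ C.support.tail ∧ G.Adj x₁ z := fun z => by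
    rw [hA, Finset.mem_filter, hmemLF]
  have hBmem : ∀ z, z ∈ B ↔ z ∈ C.support.tail ∧ G.Adj x₂ z := fun z => by
    rw [hB, Finset.mem_filter, hmemLF]
  -- degree bounds
  have hdegA : G.minDegree ≤ A.card + 1 := by
    have hsub : G.neighborFinset x₁ ⊆ insert x₂ A := by
      intro z hz
      rw [SimpleGraph.mem_neighborFinset] at hz
      by_cases hzx : z = x₂
      · simp [hzx]
      · exact Finset.mem_insert_of_mem ((hAmem z).2
          ⟨nbr_on_cycle hC hdom hx₁ hx₂ hx12 hz hzx, hz⟩)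
    calc G.minDegree ≤ G.degree x₁ := G.minDegree_le_degree x₁
      _ = (G.neighborFinset x₁).card := rfl
      _ ≤ (insert x₂ A).card := Finset.card_le_card hsub
      _ ≤ A.card + 1 := Finset.card_insert_le _ _
  have hdegB : G.minDegree ≤ B.card + 1 := by
    have hsub : G.neighborFinset x₂ ⊆ insert x₁ B := by
      intro z hz
      rw [SimpleGraph.mem_neighborFinset] at hz
      by_cases hzx : z = x₁
      · simp [hzx]
      · exact Finset.mem_insert_of_mem ((hBmem z).2
          ⟨nbr_on_cycle hC hdom hx₂ hx₁ hx12.symm hz hzx, hz⟩)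
    calc G.minDegree ≤ G.degree x₂ := G.minDegree_le_degree x₂
      _ = (G.neighborFinset x₂).card := rfl
      _ ≤ (insert x₁ B).card := Finset.card_le_card hsub
      _ ≤ B.card + 1 := Finset.card_insert_le _ _
  set Ap : Finset V := A.image σ with hAp
  set Bp : Finset V := B.image σ with hBp
  set T : Finset V := A ∩ B with hT
  have hTsub : T ⊆ LF := fun z hz => hAsub (Finset.mem_of_mem_inter_left hz)
  set Tm : Finset V := LF.filter (fun z => σ z ∈ T) with hTm
  have hTmsub : Tm ⊆ LF := Finset.filter_subset _ _
  -- disjointness facts from surgeries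
  have d1 : Disjoint A Ap := by
    rw [Finset.disjoint_left]
    intro z hzA hzAp
    obtain ⟨a, haA, rfl⟩ := Finset.mem_image.1 hzAp
    exact surgery_alpha hC hlong hx₁ ((hAmem a).1 haA).1 ((hAmem a).1 haA).2
      ((hAmem _).1 hzA).2
  have d2 : Disjoint B Bp := by
    rw [Finset.disjoint_left]
    intro z hzB hzBp
    obtain ⟨b, hbB, rfl⟩ := Finset.mem_image.1 hzBp
    exact surgery_alpha hC hlong hx₂ ((hBmem b).1 hbB).1 ((hBmem b).1 hbB).2
      ((hBmem _).1 hzB).2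
  have d3 : Disjoint B Ap := by
    rw [Finset.disjoint_left]
    intro z hzB hzAp
    obtain ⟨a, haA, rfl⟩ := Finset.mem_image.1 hzAp
    exact surgery_beta hC hlong hx₁ hx₂ hx12 ((hAmem a).1 haA).1 ((hAmem a).1 haA).2
      ((hBmem _).1 hzB).2
  have d4 : Disjoint A Bp := by
    rw [Finset.disjoint_left]
    intro z hzA hzBp
    obtain ⟨b, hbB, rfl⟩ := Finset.mem_image.1 hzBp
    exact surgery_beta hC hlong hx₂ hx₁ hx12.symm ((hBmem b).1 hbB).1 ((hBmem b).1 hbB).2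
      ((hAmem _).1 hzA).2
  -- γ facts
  have g1 : ∀ a ∈ A, σ (σ a) ∉ B := by
    intro a haA hmem
    exact surgery_gamma hC hlong hx₁ hx₂ hx12 ((hAmem a).1 haA).1 ((hAmem a).1 haA).2
      ((hBmem _).1 hmem).2
  have g2 : ∀ b ∈ B, σ (σ b) ∉ A := by
    intro b hbB hmem
    exact surgery_gamma hC hlong hx₂ hx₁ hx12.symm ((hBmem b).1 hbB).1 ((hBmem b).1 hbB).2
      ((hAmem _).1 hmem).2
  have hApBp : Ap ∩ Bp = T.image σ := by
    apply Finset.Subset.antisymm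
    · intro z hz
      rw [Finset.mem_inter] at hz
      obtain ⟨a, haA, rfl⟩ := Finset.mem_image.1 hz.1
      obtain ⟨b, hbB, hba⟩ := Finset.mem_image.1 hz.2
      have : b = a := hσinj (hBsub hbB) (hAsub haA) hba
      subst this
      exact Finset.mem_image_of_mem _ (Finset.mem_inter.2 ⟨haA, hbB⟩)
    · intro z hz
      obtain ⟨t, htT, rfl⟩ := Finset.mem_image.1 hz
      rw [hT, Finset.mem_inter] at htT
      exact Finset.mem_inter.2 ⟨Finset.mem_image_of_mem _ htT.1,
        Finset.mem_image_of_mem _ htT.2⟩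
  -- Tm disjoint from A ∪ B ∪ Ap ∪ Bp
  have dTmA : Disjoint Tm A := by
    rw [Finset.disjoint_left]
    intro z hzTm hzA
    have hσz : σ z ∈ T := (Finset.mem_filter.1 hzTm).2
    have : σ z ∈ B := Finset.mem_of_mem_inter_right hσz
    exact (Finset.disjoint_left.1 d3) this (Finset.mem_image_of_mem _ hzA)
  have dTmB : Disjoint Tm B := by
    rw [Finset.disjoint_left]
    intro z hzTm hzB
    have hσz : σ z ∈ T := (Finset.mem_filter.1 hzTm).2
    have : σ z ∈ A := Finset.mem_of_mem_inter_left hσz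
    exact (Finset.disjoint_left.1 d4) this (Finset.mem_image_of_mem _ hzB)
  have dTmAp : Disjoint Tm Ap := by
    rw [Finset.disjoint_left]
    intro z hzTm hzAp
    obtain ⟨a, haA, rfl⟩ := Finset.mem_image.1 hzAp
    have hσz : σ (σ a) ∈ T := (Finset.mem_filter.1 hzTm).2
    exact g1 a haA (Finset.mem_of_mem_inter_right hσz)
  have dTmBp : Disjoint Tm Bp := by
    rw [Finset.disjoint_left]
    intro z hzTm hzBp
    obtain ⟨b, hbB, rfl⟩ := Finset.mem_image.1 hzBp
    have hσz : σ (σ b) ∈ T := (Finset.mem_filter.1 hzTm).2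
    exact g2 b hbB (Finset.mem_of_mem_inter_left hσz)
  -- card of Tm
  have hLFimg : LF.image σ = LF := by
    apply Finset.eq_of_subset_of_card_le
    · intro z hz
      obtain ⟨a, ha, rfl⟩ := Finset.mem_image.1 hz
      exact hσmem a ha
    · rw [Finset.card_image_of_injOn hσinj]
  have hTmimg : Tm.image σ = T := by
    apply Finset.Subset.antisymm
    · intro z hz
      obtain ⟨a, ha, rfl⟩ := Finset.mem_image.1 hz
      exact (Finset.mem_filter.1 ha).2
    · intro t htT
      have : t ∈ LF.image σ := hLFimg.symm ▸ hTsub htT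
      obtain ⟨z, hzLF, rfl⟩ := Finset.mem_image.1 this
      exact Finset.mem_image_of_mem _ (Finset.mem_filter.2 ⟨hzLF, htT⟩)
  have hTmcard : Tm.card = T.card := by
    rw [← hTmimg, Finset.card_image_of_injOn (fun a ha b hb h =>
      hσinj (hTmsub ha) (hTmsub hb) h)]
  -- T1, T2, good/bad split
  set T1 : Finset V := T.filter (fun t => σ t ∈ S) with hT1
  set T2 : Finset V := T \ T1 with hT2
  set T2g : Finset V := T2.filter (fun t => σ (σ t) ∉ Tm) with hT2g
  set T2b : Finset V := T2 \ T2g with hT2b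
  set E : Finset V := T2g.image (fun t => σ (σ t)) with hE
  have hT2sub : T2 ⊆ T := Finset.sdiff_subset
  have hT2gsub : T2g ⊆ T2 := Finset.filter_subset _ _
  have hT2memA : ∀ t ∈ T2, t ∈ A := fun t ht =>
    Finset.mem_of_mem_inter_left (hT2sub ht)
  have hT2nS : ∀ t ∈ T2, σ t ∉ S := by
    intro t ht hσtS
    rw [hT2, Finset.mem_sdiff] at ht
    exact ht.2 (Finset.mem_filter.2 ⟨ht.1, hσtS⟩)
  -- δ fact : for t ∈ T2, σ (σ t) ∉ A
  have dfact : ∀ t ∈ T2, σ (σ t) ∉ A := by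
    intro t ht hmem
    have haA := hT2memA t ht
    have := surgery_delta hC hmaxS hx₁ hx₁S ((hAmem t).1 haA).1 ((hAmem t).1 haA).2
      ((hAmem _).1 hmem).2
    exact hT2nS t ht this
  -- ε fact : for t ∈ T2b, σ (σ t) ∈ S
  have efact : ∀ t ∈ T2b, σ (σ t) ∈ S := by
    intro t ht
    rw [hT2b, Finset.mem_sdiff] at ht
    have ht2 := ht.1
    have hbad : σ (σ t) ∈ Tm := by
      by_contra hgood
      exact ht.2 (Finset.mem_filter.2 ⟨ht2, hgood⟩)
    have hσ3 : σ (σ (σ t)) ∈ T := (Finset.mem_filter.1 hbad).2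
    have haA := hT2memA t ht2
    exact surgery_epsilon hC hmaxS hx₁ hx₂ hx12 hx₁S ((hAmem t).1 haA).1
      ((hAmem t).1 haA).2 ((hBmem _).1 (Finset.mem_of_mem_inter_right hσ3)).2
      (hT2nS t ht2)
  -- E is disjoint from A ∪ B ∪ Ap ∪ Bp ∪ Tm
  have hTsubLF2 : ∀ t ∈ T2g, t ∈ LF := fun t ht => hTsub (hT2sub (hT2gsub ht))
  have dEA : Disjoint E A := by
    rw [Finset.disjoint_left]
    intro z hzE hzA
    obtain ⟨t, ht, rfl⟩ := Finset.mem_image.1 hzE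
    exact dfact t (hT2gsub ht) hzA
  have dEB : Disjoint E B := by
    rw [Finset.disjoint_left]
    intro z hzE hzB
    obtain ⟨t, ht, rfl⟩ := Finset.mem_image.1 hzE
    exact g1 t (hT2memA t (hT2gsub ht)) hzB
  have dEAp : Disjoint E Ap := by
    rw [Finset.disjoint_left]
    intro z hzE hzAp
    obtain ⟨t, ht, rfl⟩ := Finset.mem_image.1 hzE
    obtain ⟨a, haA, hah⟩ := Finset.mem_image.1 hzAp
    have : a = σ t := hσinj (hAsub haA) (hσmem _ (hTsubLF2 t ht)) hah
    subst this
    exact (Finset.disjoint_left.1 d1) haA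
      (Finset.mem_image_of_mem _ (hT2memA t (hT2gsub ht)))
  have dEBp : Disjoint E Bp := by
    rw [Finset.disjoint_left]
    intro z hzE hzBp
    obtain ⟨t, ht, rfl⟩ := Finset.mem_image.1 hzE
    obtain ⟨b, hbB, hbh⟩ := Finset.mem_image.1 hzBp
    have : b = σ t := hσinj (hBsub hbB) (hσmem _ (hTsubLF2 t ht)) hbh
    subst this
    exact (Finset.disjoint_left.1 d3) hbB
      (Finset.mem_image_of_mem _ (hT2memA t (hT2gsub ht)))
  have dETm : Disjoint E Tm := by
    rw [Finset.disjoint_left]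
    intro z hzE hzTm
    obtain ⟨t, ht, rfl⟩ := Finset.mem_image.1 hzE
    exact (Finset.mem_filter.1 ht).2 hzTm
  have hEcard : E.card = T2g.card := Finset.card_image_of_injOn (fun a ha b hb h => by
    have h1 := hσinj (hσmem _ (hTsubLF2 a ha)) (hσmem _ (hTsubLF2 b hb)) h
    exact hσinj (hTsubLF2 a ha) (hTsubLF2 b hb) h1)
  have hEsub : E ⊆ LF := by
    intro z hz
    obtain ⟨t, ht, rfl⟩ := Finset.mem_image.1 hz
    exact hσmem _ (hσmem _ (hTsubLF2 t ht))
  -- the S-bound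
  set K : Finset V := T1.image σ ∪ T2b.image (fun t => σ (σ t)) with hK
  have hT1sub : T1 ⊆ T := Finset.filter_subset _ _
  have hT2bsub : T2b ⊆ T2 := Finset.sdiff_subset
  have hKsub : K ⊆ LF ∩ S := by
    intro z hz
    rw [hK, Finset.mem_union] at hz
    rcases hz with hz | hz
    · obtain ⟨t, ht, rfl⟩ := Finset.mem_image.1 hz
      exact Finset.mem_inter.2 ⟨hσmem _ (hTsub (hT1sub ht)), (Finset.mem_filter.1 ht).2⟩
    · obtain ⟨t, ht, rfl⟩ := Finset.mem_image.1 hz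
      exact Finset.mem_inter.2 ⟨hσmem _ (hσmem _ (hTsub (hT2sub (hT2bsub ht)))),
        efact t ht⟩
  have hKcard : T1.card + T2b.card ≤ K.card := by
    rw [hK]
    have hdisj : Disjoint (T1.image σ) (T2b.image (fun t => σ (σ t))) := by
      rw [Finset.disjoint_left]
      intro z hz1 hz2
      obtain ⟨t, ht, rfl⟩ := Finset.mem_image.1 hz1
      obtain ⟨t', ht', hth⟩ := Finset.mem_image.1 hz2
      have htLF : t ∈ LF := hTsub (hT1sub ht)
      have ht'LF : t' ∈ LF := hTsub (hT2sub (hT2bsub ht'))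
      have : σ t' = t := hσinj (hσmem _ ht'LF) htLF hth
      have ht'A : t' ∈ A := Finset.mem_of_mem_inter_left (hT2sub (hT2bsub ht'))
      have : σ t' ∈ A := this ▸ Finset.mem_of_mem_inter_left (hT1sub ht)
      exact (Finset.disjoint_left.1 d1) this (Finset.mem_image_of_mem _ ht'A)
    rw [Finset.card_union_of_disjoint hdisj]
    have c1 : (T1.image σ).card = T1.card := Finset.card_image_of_injOn
      (fun a ha b hb h => hσinj (hTsub (hT1sub ha)) (hTsub (hT1sub hb)) h)
    have c2 : (T2b.image (fun t => σ (σ t))).card = T2b.card :=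
      Finset.card_image_of_injOn (fun a ha b hb h => by
        have hA' := hTsub (hT2sub (hT2bsub ha))
        have hB' := hTsub (hT2sub (hT2bsub hb))
        exact hσinj hA' hB' (hσinj (hσmem _ hA') (hσmem _ hB') h))
    omega
  have hScard : T1.card + T2b.card + 1 ≤ S.card := by
    have h1 : K.card ≤ (LF ∩ S).card := Finset.card_le_card hKsub
    have h2 : insert x₁ (LF ∩ S) ⊆ S := by
      intro z hz
      rcases Finset.mem_insert.1 hz with rfl | hz
      · exact hx₁S
      · exact Finset.mem_of_mem_inter_right hz
    have h3 : (insert x₁ (LF ∩ S)).card = (LF ∩ S).card + 1 :=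
      Finset.card_insert_of_notMem (fun h => hx₁LF (Finset.mem_of_mem_inter_left h))
    have h4 := Finset.card_le_card h2
    omega
  -- the main count
  have hbig : (A ∪ B).card + (Ap ∪ Bp).card + Tm.card + E.card ≤ LF.card := by
    have s1 : A ∪ B ⊆ LF := Finset.union_subset hAsub hBsub
    have s2 : Ap ∪ Bp ⊆ LF := Finset.union_subset
      (fun z hz => by obtain ⟨a, ha, rfl⟩ := Finset.mem_image.1 hz; exact hσmem _ (hAsub ha))
      (fun z hz => by obtain ⟨b, hb, rfl⟩ := Finset.mem_image.1 hz; exact hσmem _ (hBsub hb))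
    have dis1 : Disjoint (A ∪ B) (Ap ∪ Bp) := by
      simp only [Finset.disjoint_union_left, Finset.disjoint_union_right]
      exact ⟨⟨d1, d3⟩, ⟨d4, d2⟩⟩
    have dis2 : Disjoint (A ∪ B ∪ (Ap ∪ Bp)) Tm := by
      simp only [Finset.disjoint_union_left]
      exact ⟨⟨dTmA.symm, dTmB.symm⟩, ⟨dTmAp.symm, dTmBp.symm⟩⟩
    have dis3 : Disjoint (A ∪ B ∪ (Ap ∪ Bp) ∪ Tm) E := by
      simp only [Finset.disjoint_union_left]
      exact ⟨⟨⟨dEA.symm, dEB.symm⟩, ⟨dEAp.symm, dEBp.symm⟩⟩, dETm.symm⟩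
    calc (A ∪ B).card + (Ap ∪ Bp).card + Tm.card + E.card
        = (A ∪ B ∪ (Ap ∪ Bp)).card + Tm.card + E.card := by
          rw [Finset.card_union_of_disjoint dis1]
      _ = (A ∪ B ∪ (Ap ∪ Bp) ∪ Tm).card + E.card := by
          rw [Finset.card_union_of_disjoint dis2]
      _ = (A ∪ B ∪ (Ap ∪ Bp) ∪ Tm ∪ E).card := by
          rw [Finset.card_union_of_disjoint dis3]
      _ ≤ LF.card := Finset.card_le_card (Finset.union_subset (Finset.union_subset
          (Finset.union_subset s1 s2) hTmsub) hEsub)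
  have hu1 : (A ∪ B).card + T.card = A.card + B.card := by
    rw [hT]; exact Finset.card_union_add_card_inter A B
  have hu2 : (Ap ∪ Bp).card + T.card = A.card + B.card := by
    have : (Ap ∪ Bp).card + (Ap ∩ Bp).card = Ap.card + Bp.card :=
      Finset.card_union_add_card_inter Ap Bp
    have hApc : Ap.card = A.card := Finset.card_image_of_injOn
      (fun a ha b hb h => hσinj (hAsub ha) (hAsub hb) h)
    have hBpc : Bp.card = B.card := Finset.card_image_of_injOn
      (fun a ha b hb h => hσinj (hBsub ha) (hBsub hb) h)
    have hTc : (Ap ∩ Bp).card = T.card := by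
      rw [hApBp, Finset.card_image_of_injOn
        (fun a ha b hb h => hσinj (hTsub ha) (hTsub hb) h)]
    omega
  have hsplit1 : T2.card + T1.card = T.card :=
    Finset.card_sdiff_add_card_eq_card hT1sub
  have hsplit2 : T2b.card + T2g.card = T2.card :=
    Finset.card_sdiff_add_card_eq_card hT2gsub
  have hLFc : LF.card = C.length := by
    rw [hLF, List.toFinset_card_of_nodup hC.support_nodup]
    have h1 := C.length_support
    have h2 : C.support.length = C.support.tail.length + 1 := by
      conv_lhs => rw [C.support_eq_cons]
      simp
    omega
  omega


end Helpers

open SimpleGraph in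
/-- **Lemma 3.** Let `S` be a minimum cut-set of `G`. Then either `c ≥ 4δ - κ - 3` or
there is a longest cycle `C` with `{x₁, x₂} ∩ S = ∅` for each edge `x₁x₂` of `G \ C`. -/
theorem statement_6 {V : Type*} [Fintype V] [DecidableEq V]
    (G : SimpleGraph V) [DecidableRel G.Adj]
    (h4 : 4 ≤ G.vertexConnectivity)
    (hD3 : ∀ (v : V) (C : G.Walk v v), IsLongestCycle C → IsD3Cycle C)
    (S : Finset V) (hS : G.IsMinCutSet S) :
    4 * G.minDegree ≤ G.circumference + G.vertexConnectivity + 3 ∨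
      ∃ (v : V) (C : G.Walk v v), IsLongestCycle C ∧
        ∀ x₁ x₂ : V, G.Adj x₁ x₂ → x₁ ∉ C.support → x₂ ∉ C.support →
          x₁ ∉ S ∧ x₂ ∉ S := by
  classical
  by_cases hgood : ∃ (w : V) (D : G.Walk w w), IsLongestCycle D ∧
      ∀ x₁ x₂ : V, G.Adj x₁ x₂ → x₁ ∉ D.support → x₂ ∉ D.support →
        x₁ ∉ S ∧ x₂ ∉ S
  · exact Or.inr hgood
  left
  -- connectivity facts
  have hveq : G.vertexConnectivity = sSup {k | k < Fintype.card V ∧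
      ∀ S' : Finset V, S'.card < k → (G.induce ((↑S' : Set V)ᶜ)).Connected} := rfl
  set conSet : Set ℕ := {k | k < Fintype.card V ∧
      ∀ S' : Finset V, S'.card < k → (G.induce ((↑S' : Set V)ᶜ)).Connected} with hconSet
  have hbddcon : BddAbove conSet := ⟨Fintype.card V, fun k hk => le_of_lt hk.1⟩
  have hnecon : conSet.Nonempty := by
    by_contra h
    rw [Set.not_nonempty_iff_eq_empty] at h
    rw [hveq, h] at h4
    simp [csSup_empty] at h4
  have hκ := Nat.sSup_mem hnecon hbddcon
  have hκval : sSup conSet = G.vertexConnectivity := by rw [hveq]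
  rw [hκval] at hκ
  obtain ⟨hκlt, hκconn⟩ := hκ
  have hcard5 : 5 ≤ Fintype.card V := by omega
  have hNE : Nonempty V := by
    rw [← Fintype.card_pos_iff]; omega
  -- minimum degree at least 2
  have hδ : 2 ≤ G.minDegree := by
    by_contra hlt
    push_neg at hlt
    obtain ⟨v₀, hv₀⟩ := G.exists_minimal_degree_vertex
    have hdeg : (G.neighborFinset v₀).card ≤ 1 := by
      have : G.degree v₀ = (G.neighborFinset v₀).card := rfl
      omega
    have hconn' := hκconn (G.neighborFinset v₀) (by omega)
    have hcompl : 1 < ((insert v₀ (G.neighborFinset v₀))ᶜ : Finset V).card := by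
      rw [Finset.card_compl]
      have := Finset.card_insert_le v₀ (G.neighborFinset v₀)
      omega
    obtain ⟨w, hw⟩ := Finset.card_pos.1
      (by omega : 0 < ((insert v₀ (G.neighborFinset v₀))ᶜ : Finset V).card)
    rw [Finset.mem_compl, Finset.mem_insert] at hw
    push_neg at hw
    have hv₀mem : v₀ ∈ ((↑(G.neighborFinset v₀) : Set V)ᶜ) := by simp
    have hwmem : w ∈ ((↑(G.neighborFinset v₀) : Set V)ᶜ) := by
      simp only [Set.mem_compl_iff, Finset.mem_coe, SimpleGraph.mem_neighborFinset]
      intro had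
      exact hw.2 (by rwa [SimpleGraph.mem_neighborFinset])
    obtain ⟨p⟩ := hconn'.preconnected ⟨v₀, hv₀mem⟩ ⟨w, hwmem⟩
    have hnp : ¬ p.Nil := Walk.not_nil_of_ne (by
      intro h
      exact hw.1 (congrArg Subtype.val h).symm)
    obtain ⟨u, hadj, q, -⟩ := SimpleGraph.Walk.not_nil_iff.1 hnp
    have hadj' : G.Adj v₀ ↑u := hadj
    exact u.2 (by rw [Finset.mem_coe, SimpleGraph.mem_neighborFinset]; exact hadj')
  -- G is connected
  have hGconn : G.Connected := by
    have h0 := hκconn (∅ : Finset V) (by simpa using (by omega : 0 < G.vertexConnectivity))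
    have hempty : ((↑(∅ : Finset V) : Set V)ᶜ) = Set.univ := by simp
    rw [hempty] at h0
    exact (SimpleGraph.induceUnivIso G).connected_iff.1 h0
  -- there is a cycle
  have hcyc : ∃ (w : V) (D : G.Walk w w), D.IsCycle := by
    by_contra h
    push_neg at h
    have hac : G.IsAcyclic := fun w D hD => h w D hD
    have htree : G.IsTree := ⟨hGconn, hac⟩
    have hE := htree.card_edgeFinset
    have hhs := G.sum_degrees_eq_twice_card_edges
    have hdegs : ∀ w : V, 2 ≤ G.degree w := fun w => le_trans hδ (G.minDegree_le_degree w)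
    have hsum : Fintype.card V * 2 ≤ ∑ w, G.degree w := by
      calc Fintype.card V * 2 = ∑ _w : V, 2 := by
            rw [Finset.sum_const, smul_eq_mul, Finset.card_univ]
        _ ≤ ∑ w, G.degree w := Finset.sum_le_sum (fun i _ => hdegs i)
    omega
  -- length of cycles is bounded
  have hlenbound : ∀ (w : V) (D : G.Walk w w), D.IsCycle → D.length ≤ Fintype.card V := by
    intro w D hD
    have h1 := D.length_support
    have h2 : D.support.length = D.support.tail.length + 1 := by
      conv_lhs => rw [D.support_eq_cons]
      simp
    have h3 := List.Nodup.length_le_card hD.support_nodup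
    omega
  -- circumference is attained
  set cset : Set ℕ := {n | ∃ (w : V) (D : G.Walk w w), D.IsCycle ∧ D.length = n} with hcset
  have hbddc : BddAbove cset := by
    refine ⟨Fintype.card V, ?_⟩
    rintro n ⟨w, D, hD, rfl⟩
    exact hlenbound w D hD
  have hnec : cset.Nonempty := by
    obtain ⟨w, D, hD⟩ := hcyc
    exact ⟨D.length, w, D, hD, rfl⟩
  have hcmem := Nat.sSup_mem hnec hbddc
  obtain ⟨w₀, D₀, hD₀, hD₀len⟩ := hcmem
  have hcirc : G.circumference = sSup cset := rfl
  have hlong0 : ∀ (w : V) (D : G.Walk w w), D.IsCycle → D.length ≤ sSup cset :=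
    fun w D hD => le_csSup hbddc ⟨w, D, hD, rfl⟩
  -- pick a longest cycle maximizing the number of S-vertices on it
  set fset : Set ℕ := {k | ∃ (w : V) (D : G.Walk w w), D.IsCycle ∧ D.length = sSup cset ∧
    (D.support.tail.toFinset ∩ S).card = k} with hfset
  have hbddf : BddAbove fset := by
    refine ⟨S.card, ?_⟩
    rintro k ⟨w, D, hD, hlen, rfl⟩
    exact Finset.card_le_card (Finset.inter_subset_right)
  have hnef : fset.Nonempty := ⟨_, w₀, D₀, hD₀, hD₀len, rfl⟩
  obtain ⟨w₁, C₁, hC₁, hC₁len, hC₁S⟩ := Nat.sSup_mem hnef hbddf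
  have hlong1 : ∀ (w : V) (D : G.Walk w w), D.IsCycle → D.length ≤ C₁.length := by
    intro w D hD
    rw [hC₁len]
    exact hlong0 w D hD
  have hmaxS : ∀ (w : V) (D : G.Walk w w), D.IsCycle → D.length = C₁.length →
      (D.support.tail.toFinset ∩ S).card ≤ (C₁.support.tail.toFinset ∩ S).card := by
    intro w D hD hlen
    rw [hC₁S]
    exact le_csSup hbddf ⟨w, D, hD, by rw [hlen, hC₁len], rfl⟩
  have hLongest : IsLongestCycle C₁ := ⟨hC₁, hlong1⟩
  -- extract a bad edge
  push_neg at hgood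
  obtain ⟨x₁, x₂, hadj, hx₁C, hx₂C, hbadS⟩ := hgood w₁ C₁ hLongest
  have hdom := (hD3 w₁ C₁ hLongest).2
  have hS2 : S.card = G.vertexConnectivity := hS.2
  by_cases hx₁S : x₁ ∈ S
  · have hmain := master hC₁ hlong1 hmaxS hdom hx₁C hx₂C hadj hx₁S
    rw [hcirc, ← hC₁len]
    omega
  · have hx₂S : x₂ ∈ S := hbadS hx₁S
    have hmain := master hC₁ hlong1 hmaxS hdom hx₂C hx₁C hadj.symm hx₂S
    rw [hcirc, ← hC₁len]
    omega
end

section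
/- Let G be a 4-connected finite simple graph, let C be a longest cycle in G which is a D₃-cycle, and let x₁x₂ be an edge of G∖C. With R = N_C(x₁) ∪ N_C(x₂), M = N_C(x₁) ∩ N_C(x₂), A = R∖M, and Y = R ∪ R⁺ ∪ M⁺², the sets R, R⁺, and M⁺² are pairwise disjoint, and |Y| = 2|R| + |M| = 3|M| + 2|A|. -/
namespace SimpleGraph

variable {V : Type*} [DecidableEq V] {G : SimpleGraph V} {x : V}

omit [DecidableEq V] in
lemma walk_support_get {u w : V} (p : G.Walk u w) : ∀ (i : ℕ) (h : i < p.support.length),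
    p.support.get ⟨i, h⟩ = p.getVert i := by
  induction p with
  | nil =>
    intro i h
    simp only [Walk.support_nil, List.length_singleton] at h
    interval_cases i
    simp
  | cons ha q ih =>
    intro i h
    cases i with
    | zero => simp
    | succ j =>
      simp only [Walk.support_cons, List.get_cons_succ, Walk.getVert_cons_succ]
      exact ih j (by simpa [Walk.support_cons] using h)

omit [DecidableEq V] in
lemma walk_support_tail_get {u w : V} (p : G.Walk u w) (i : ℕ) (h : i < p.support.tail.length) :
    p.support.tail.get ⟨i, h⟩ = p.getVert (i + 1) := by
  rw [List.get_tail, walk_support_get]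

omit [DecidableEq V] in
/-- membership in tail of the support of a nonnil closed walk -/
lemma mem_support_tail_iff {v : V} (p : G.Walk v v) (hp : ¬ p.Nil) (x : V) :
    x ∈ p.support.tail ↔ x ∈ p.support := by
  constructor
  · exact List.mem_of_mem_tail
  · intro h
    have h2 : p.support.tail ≠ [] := by
      rw [← Walk.support_tail_of_not_nil p hp]; exact Walk.support_ne_nil _
    rw [p.support_eq_cons] at h
    rcases List.mem_cons.1 h with rfl | h
    · have hv : p.support.tail.getLast h2 = x := by
        rw [List.getLast_tail, p.getLast_support]
      have := List.getLast_mem h2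
      rwa [hv] at this
    · exact h

omit [DecidableEq V] in
lemma lenpos_of_cycle {v : V} {p : G.Walk v v} (hp : p.IsCycle) : ¬ p.Nil := by
  rw [Walk.not_nil_iff_lt_length]
  have := hp.three_le_length; omega

lemma cycleSucc_getVert {v : V} {C : G.Walk v v} (hC : C.IsCycle) {i : ℕ} (hi : i < C.length) :
    cycleSucc C (C.getVert i) = C.getVert (i + 1) := by
  have hnodup : C.support.tail.Nodup := hC.support_nodup
  have htl : C.support.tail.length = C.length := by
    have := C.length_support
    rw [C.support_eq_cons] at this
    simpa using this
  set n := C.length with hn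
  have hn3 : 3 ≤ n := hC.three_le_length
  -- index of getVert i in the tail
  have key : ∀ (j : ℕ) (hj : j < C.support.tail.length),
      cycleSucc C (C.support.tail.get ⟨j, hj⟩) = C.support.tail.get
        ⟨(j+1) % C.support.tail.length, Nat.mod_lt _ (by omega)⟩ := by
    intro j hj
    rw [cycleSucc, dif_pos (List.get_mem _ _)]
    exact List.next_getElem _ hnodup _ _
  rcases Nat.eq_zero_or_pos i with rfl | hipos
  · have hj : n - 1 < C.support.tail.length := by omega
    have h0 : C.support.tail.get ⟨n - 1, hj⟩ = C.getVert 0 := by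
      rw [walk_support_tail_get]
      rw [show n - 1 + 1 = n from by omega, Walk.getVert_length, Walk.getVert_zero]
    rw [← h0, key]
    rw [walk_support_tail_get]
    congr 1
    rw [htl]
    rw [show n - 1 + 1 = n from by omega, Nat.mod_self]
  · have hj : i - 1 < C.support.tail.length := by omega
    have h0 : C.support.tail.get ⟨i - 1, hj⟩ = C.getVert i := by
      rw [walk_support_tail_get, show i - 1 + 1 = i from by omega]
    rw [← h0, key]
    rw [walk_support_tail_get]
    congr 1
    rw [htl, show i - 1 + 1 = i from by omega, Nat.mod_eq_of_lt (by omega)]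

lemma cycleSucc_mem_support {v : V} {C : G.Walk v v} (hx : x ∈ C.support.tail) :
    cycleSucc C x ∈ C.support := by
  rw [cycleSucc, dif_pos hx]
  exact List.mem_of_mem_tail (List.next_mem _ _ _)

lemma cycleSucc_injOn {v : V} {C : G.Walk v v} (hC : C.IsCycle) {a b : V}
    (ha : a ∈ C.support) (hb : b ∈ C.support) (hab : cycleSucc C a = cycleSucc C b) : a = b := by
  have hnil := lenpos_of_cycle hC
  have ha' : a ∈ C.support.tail := (mem_support_tail_iff C hnil a).2 ha
  have hb' : b ∈ C.support.tail := (mem_support_tail_iff C hnil b).2 hb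
  rw [cycleSucc, dif_pos ha', cycleSucc, dif_pos hb'] at hab
  have h1 := List.prev_next C.support.tail hC.support_nodup a ha'
  have h2 := List.prev_next C.support.tail hC.support_nodup b hb'
  rw [← h1, ← h2]
  congr 1

lemma cycleSucc_rotate {v u : V} {C : G.Walk v v} (hC : C.IsCycle) (hu : u ∈ C.support)
    (hx : x ∈ C.support) : cycleSucc (C.rotate u hu) x = cycleSucc C x := by
  have hE : (C.rotate u hu).IsCycle := hC.rotate hu
  have hrot := C.support_rotate u hu
  have hx1 : x ∈ C.support.tail := (mem_support_tail_iff C (lenpos_of_cycle hC) x).2 hx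
  have hx2 : x ∈ (C.rotate u hu).support.tail := hrot.mem_iff.2 hx1
  rw [cycleSucc, dif_pos hx2, cycleSucc, dif_pos hx1]
  exact List.isRotated_next_eq hrot hE.support_nodup hx2

lemma length_rotate {v u : V} (C : G.Walk v v) (hu : u ∈ C.support) :
    (C.rotate u hu).length = C.length := by
  rw [← Walk.length_darts, ← Walk.length_darts]
  exact (C.rotate_darts u hu).perm.length_eq

end SimpleGraph

namespace SimpleGraph

variable {V : Type*} [DecidableEq V] {G : SimpleGraph V}

omit [DecidableEq V] in
lemma detour2 {v : V} {C : G.Walk v v} (hC : IsLongestCycle C) {x u w : V}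
    (hx : x ∉ C.support) (h1 : G.Adj u x) (h2 : G.Adj x w) (hne : u ≠ w)
    (P : G.Walk w u) (hP : P.IsPath) (hPsub : ∀ y ∈ P.support, y ∈ C.support)
    (hlen : C.length ≤ P.length + 1) : False := by
  have hxP : x ∉ P.support := fun h => hx (hPsub x h)
  have hcyc : (Walk.cons h1 (Walk.cons h2 P)).IsCycle := by
    rw [Walk.cons_isCycle_iff]
    refine ⟨hP.cons hxP, ?_⟩
    simp only [Walk.edges_cons, List.mem_cons, not_or]
    constructor
    · intro he
      rw [Sym2.eq_iff] at he
      rcases he with ⟨rfl, rfl⟩ | ⟨rfl, _⟩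
      · exact hx (hPsub _ P.end_mem_support)
      · exact hne rfl
    · intro he
      exact hx (hPsub _ (P.snd_mem_support_of_mem_edges he))
  have hle := hC.2 _ _ hcyc
  simp only [Walk.length_cons] at hle
  omega

omit [DecidableEq V] in
lemma detour3 {v : V} {C : G.Walk v v} (hC : IsLongestCycle C) {x y u w : V}
    (hx : x ∉ C.support) (hy : y ∉ C.support) (hxy : x ≠ y)
    (h1 : G.Adj u x) (h2 : G.Adj x y) (h3 : G.Adj y w)
    (P : G.Walk w u) (hP : P.IsPath) (hPsub : ∀ z ∈ P.support, z ∈ C.support)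
    (hlen : C.length ≤ P.length + 2) : False := by
  have hxP : x ∉ P.support := fun h => hx (hPsub x h)
  have hyP : y ∉ P.support := fun h => hy (hPsub y h)
  have hpath : (Walk.cons h2 (Walk.cons h3 P)).IsPath := by
    refine (hP.cons hyP).cons ?_
    simp only [Walk.support_cons, List.mem_cons, not_or]
    exact ⟨hxy, hxP⟩
  have hcyc : (Walk.cons h1 (Walk.cons h2 (Walk.cons h3 P))).IsCycle := by
    rw [Walk.cons_isCycle_iff]
    refine ⟨hpath, ?_⟩
    simp only [Walk.edges_cons, List.mem_cons, not_or]
    refine ⟨?_, ?_, ?_⟩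
    · intro he
      rw [Sym2.eq_iff] at he
      rcases he with ⟨rfl, rfl⟩ | ⟨rfl, _⟩
      · exact hx (hPsub _ P.end_mem_support)
      · exact hy (hPsub _ P.end_mem_support)
    · intro he
      rw [Sym2.eq_iff] at he
      rcases he with ⟨_, rfl⟩ | ⟨_, rfl⟩
      · exact hx (hPsub _ P.start_mem_support)
      · exact hxy rfl
    · intro he
      exact hx (hPsub _ (P.snd_mem_support_of_mem_edges he))
  have hle := hC.2 _ _ hcyc
  simp only [Walk.length_cons] at hle
  omega

end SimpleGraph

namespace SimpleGraph

variable {V : Type*} [DecidableEq V] {G : SimpleGraph V}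

lemma main1 {v : V} {C : G.Walk v v} (hC : IsLongestCycle C) {x₁ x₂ : V} (hadj : G.Adj x₁ x₂)
    (hx₁ : x₁ ∉ C.support) (hx₂ : x₂ ∉ C.support) {u : V} (hu : u ∈ C.support)
    (hau : G.Adj x₁ u ∨ G.Adj x₂ u)
    (haz : G.Adj x₁ (cycleSucc C u) ∨ G.Adj x₂ (cycleSucc C u)) :
    False := by
  have hCyc := hC.1
  set E := C.rotate u hu with hEdef
  have hEcyc : E.IsCycle := hCyc.rotate hu
  have hElen : E.length = C.length := length_rotate C hu
  have hEnil : ¬ E.Nil := lenpos_of_cycle hEcyc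
  have hElong : IsLongestCycle E := ⟨hEcyc, fun w D hD => (hC.2 w D hD).trans_eq hElen.symm⟩
  have hmemE : ∀ y, y ∈ E.support ↔ y ∈ C.support := by
    intro y
    rw [← mem_support_tail_iff E hEnil y, ← mem_support_tail_iff C (lenpos_of_cycle hCyc) y]
    exact (C.support_rotate u hu).mem_iff
  have h3 : 3 ≤ E.length := hEcyc.three_le_length
  have hz : cycleSucc C u = E.getVert 1 := by
    have h0 : cycleSucc E (E.getVert 0) = E.getVert 1 := cycleSucc_getVert hEcyc (by omega)
    rw [E.getVert_zero] at h0
    rw [← cycleSucc_rotate hCyc hu hu]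
    exact h0
  have hx₁E : x₁ ∉ E.support := fun h => hx₁ ((hmemE _).1 h)
  have hx₂E : x₂ ∉ E.support := fun h => hx₂ ((hmemE _).1 h)
  have hPpath : E.tail.IsPath := by
    rw [Walk.isPath_def, Walk.support_tail_of_not_nil E hEnil]
    exact hEcyc.support_nodup
  have hPsubE : ∀ y ∈ E.tail.support, y ∈ E.support := by
    intro y hy
    rw [Walk.support_tail_of_not_nil E hEnil] at hy
    exact List.mem_of_mem_tail hy
  have hPlen : E.tail.length + 1 = E.length := Walk.length_tail_add_one hEnil
  have hne : u ≠ E.getVert 1 := by simpa using (E.adj_getVert_succ (i := 0) (by omega)).ne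
  rw [hz] at haz
  rcases hau with hau | hau <;> rcases haz with haz | haz
  · exact detour2 hElong hx₁E hau.symm haz hne E.tail hPpath hPsubE (by omega)
  · exact detour3 hElong hx₁E hx₂E hadj.ne hau.symm hadj haz E.tail hPpath hPsubE (by omega)
  · exact detour3 hElong hx₂E hx₁E hadj.ne.symm hau.symm hadj.symm haz E.tail hPpath hPsubE
      (by omega)
  · exact detour2 hElong hx₂E hau.symm haz hne E.tail hPpath hPsubE (by omega)

lemma main2 {v : V} {C : G.Walk v v} (hC : IsLongestCycle C) {x₁ x₂ : V} (hadj : G.Adj x₁ x₂)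
    (hx₁ : x₁ ∉ C.support) (hx₂ : x₂ ∉ C.support) {u : V} (hu : u ∈ C.support)
    (h1u : G.Adj x₁ u) (h2u : G.Adj x₂ u)
    (haz : G.Adj x₁ (cycleSucc C (cycleSucc C u)) ∨ G.Adj x₂ (cycleSucc C (cycleSucc C u))) :
    False := by
  have hCyc := hC.1
  set E := C.rotate u hu with hEdef
  have hEcyc : E.IsCycle := hCyc.rotate hu
  have hElen : E.length = C.length := length_rotate C hu
  have hEnil : ¬ E.Nil := lenpos_of_cycle hEcyc
  have hElong : IsLongestCycle E := ⟨hEcyc, fun w D hD => (hC.2 w D hD).trans_eq hElen.symm⟩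
  have hmemE : ∀ y, y ∈ E.support ↔ y ∈ C.support := by
    intro y
    rw [← mem_support_tail_iff E hEnil y, ← mem_support_tail_iff C (lenpos_of_cycle hCyc) y]
    exact (C.support_rotate u hu).mem_iff
  have h3 : 3 ≤ E.length := hEcyc.three_le_length
  have hz1 : cycleSucc C u = E.getVert 1 := by
    have h0 : cycleSucc E (E.getVert 0) = E.getVert 1 := cycleSucc_getVert hEcyc (by omega)
    rw [E.getVert_zero] at h0
    rw [← cycleSucc_rotate hCyc hu hu]
    exact h0
  have hw1E : E.getVert 1 ∈ E.support := by
    rw [Walk.mem_support_iff_exists_getVert]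
    exact ⟨1, rfl, by omega⟩
  have hz2 : cycleSucc C (cycleSucc C u) = E.getVert 2 := by
    rw [hz1, ← cycleSucc_rotate hCyc hu ((hmemE _).1 hw1E)]
    exact cycleSucc_getVert hEcyc (by omega)
  have hx₁E : x₁ ∉ E.support := fun h => hx₁ ((hmemE _).1 h)
  have hx₂E : x₂ ∉ E.support := fun h => hx₂ ((hmemE _).1 h)
  have hPpath : E.tail.IsPath := by
    rw [Walk.isPath_def, Walk.support_tail_of_not_nil E hEnil]
    exact hEcyc.support_nodup
  have hPsubE : ∀ y ∈ E.tail.support, y ∈ E.support := by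
    intro y hy
    rw [Walk.support_tail_of_not_nil E hEnil] at hy
    exact List.mem_of_mem_tail hy
  have hPlen : E.tail.length + 1 = E.length := Walk.length_tail_add_one hEnil
  have hP1nil : ¬ E.tail.Nil := by
    rw [Walk.not_nil_iff_lt_length]; omega
  have hvert : E.tail.getVert 1 = E.getVert 2 := E.getVert_tail
  have hP2path : E.tail.tail.IsPath := hPpath.tail
  have hP2len : E.tail.tail.length + 1 = E.tail.length := Walk.length_tail_add_one hP1nil
  have hP2subE : ∀ y ∈ E.tail.tail.support, y ∈ E.support := by
    intro y hy
    rw [Walk.support_tail_of_not_nil E.tail hP1nil] at hy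
    exact hPsubE y (List.mem_of_mem_tail hy)
  rw [hz2, ← hvert] at haz
  rcases haz with haz | haz
  · exact detour3 hElong hx₂E hx₁E hadj.ne.symm h2u.symm hadj.symm haz E.tail.tail hP2path
      hP2subE (by omega)
  · exact detour3 hElong hx₁E hx₂E hadj.ne h1u.symm hadj haz E.tail.tail hP2path
      hP2subE (by omega)

end SimpleGraph

open SimpleGraph in
/-- The sets `R`, `R⁺`, `M⁺²` are pairwise disjoint and
`|Y| = 2|R| + |M| = 3|M| + 2|A|`. -/
theorem statement_7 {V : Type*} [Fintype V] [DecidableEq V]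
    (G : SimpleGraph V) [DecidableRel G.Adj]
    (h4 : 4 ≤ G.vertexConnectivity)
    {v : V} (C : G.Walk v v) (hC : IsLongestCycle C) (hD3 : IsD3Cycle C)
    (x₁ x₂ : V) (hadj : G.Adj x₁ x₂) (hx₁ : x₁ ∉ C.support) (hx₂ : x₂ ∉ C.support)
    (R M A Y : Finset V)
    (hR : R = cycleNbhd C x₁ ∪ cycleNbhd C x₂)
    (hM : M = cycleNbhd C x₁ ∩ cycleNbhd C x₂)
    (hA : A = R \ M)
    (hY : Y = R ∪ R.image (cycleSucc C) ∪ M.image (cycleSucc C ∘ cycleSucc C)) :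
    (Disjoint R (R.image (cycleSucc C)) ∧
      Disjoint R (M.image (cycleSucc C ∘ cycleSucc C)) ∧
      Disjoint (R.image (cycleSucc C)) (M.image (cycleSucc C ∘ cycleSucc C))) ∧
    Y.card = 2 * R.card + M.card ∧ Y.card = 3 * M.card + 2 * A.card := by
  have hCyc := hC.1
  have hnil := lenpos_of_cycle hCyc
  have hRmem : ∀ z, z ∈ R ↔ z ∈ C.support ∧ (G.Adj x₁ z ∨ G.Adj x₂ z) := by
    intro z
    subst hR
    simp only [cycleNbhd, Finset.mem_union, Finset.mem_inter, mem_neighborFinset,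
      List.mem_toFinset]
    tauto
  have hMmem : ∀ z, z ∈ M ↔ z ∈ C.support ∧ G.Adj x₁ z ∧ G.Adj x₂ z := by
    intro z
    subst hM
    simp only [cycleNbhd, Finset.mem_union, Finset.mem_inter, mem_neighborFinset,
      List.mem_toFinset]
    tauto
  have hRsupp : ∀ z ∈ R, z ∈ C.support := fun z hz => ((hRmem z).1 hz).1
  have d1 : Disjoint R (R.image (cycleSucc C)) := by
    rw [Finset.disjoint_left]
    rintro z hz hz'
    obtain ⟨u, hu, rfl⟩ := Finset.mem_image.1 hz'
    obtain ⟨huC, hau⟩ := (hRmem u).1 hu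
    obtain ⟨hzC, haz⟩ := (hRmem _).1 hz
    exact main1 hC hadj hx₁ hx₂ huC hau haz
  have d2 : Disjoint R (M.image (cycleSucc C ∘ cycleSucc C)) := by
    rw [Finset.disjoint_left]
    rintro z hz hz'
    obtain ⟨u, hu, rfl⟩ := Finset.mem_image.1 hz'
    obtain ⟨huC, h1u, h2u⟩ := (hMmem u).1 hu
    obtain ⟨hzC, haz⟩ := (hRmem _).1 hz
    simp only [Function.comp_apply] at haz
    exact main2 hC hadj hx₁ hx₂ huC h1u h2u haz
  have d3 : Disjoint (R.image (cycleSucc C)) (M.image (cycleSucc C ∘ cycleSucc C)) := by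
    rw [Finset.disjoint_left]
    rintro z hz1 hz2
    obtain ⟨u, hu, rfl⟩ := Finset.mem_image.1 hz1
    obtain ⟨w, hw, heq⟩ := Finset.mem_image.1 hz2
    obtain ⟨hwC, h1w, h2w⟩ := (hMmem w).1 hw
    obtain ⟨huC, hau⟩ := (hRmem u).1 hu
    have hswC : cycleSucc C w ∈ C.support :=
      cycleSucc_mem_support ((mem_support_tail_iff C hnil w).2 hwC)
    have heq' : u = cycleSucc C w := by
      refine cycleSucc_injOn hCyc huC hswC ?_
      simpa only [Function.comp_apply] using heq.symm
    refine main1 hC hadj hx₁ hx₂ hwC (Or.inl h1w) ?_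
    rw [← heq']
    exact hau
  have hMsubR : M ⊆ R := by
    subst hM hR
    exact Finset.inter_subset_union
  have e1 : (R.image (cycleSucc C)).card = R.card :=
    Finset.card_image_of_injOn fun a ha b hb h =>
      cycleSucc_injOn hCyc (hRsupp a ha) (hRsupp b hb) h
  have e2 : (M.image (cycleSucc C ∘ cycleSucc C)).card = M.card := by
    refine Finset.card_image_of_injOn fun a ha b hb h => ?_
    have haC := hRsupp a (hMsubR ha)
    have hbC := hRsupp b (hMsubR hb)
    have hsa : cycleSucc C a ∈ C.support :=
      cycleSucc_mem_support ((mem_support_tail_iff C hnil a).2 haC)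
    have hsb : cycleSucc C b ∈ C.support :=
      cycleSucc_mem_support ((mem_support_tail_iff C hnil b).2 hbC)
    simp only [Function.comp_apply] at h
    exact cycleSucc_injOn hCyc haC hbC (cycleSucc_injOn hCyc hsa hsb h)
  have hYcard : Y.card = R.card + R.card + M.card := by
    subst hY
    rw [Finset.card_union_of_disjoint (Finset.disjoint_union_left.2 ⟨d2, d3⟩),
      Finset.card_union_of_disjoint d1, e1, e2]
  have hAcard : A.card + M.card = R.card := by
    subst hA
    exact Finset.card_sdiff_add_card_eq_card hMsubR
  exact ⟨⟨d1, d2, d3⟩, by omega, by omega⟩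
end
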